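/- arXiv:2211.13456 — 3 statements merged into one kernel-verified Lean document; each statement's English description precedes it below -/
import Mathlib

section
/- Let μ ≥ 4 and d ≥ 2. Then the space W_∇ is non-local of order 1/d and the space W_div is non-local of order (d−1)/d; that is, in each case, for every extremal vector v⊗a with support H ⊆ G, every w in the space, and every b ∈ ℂ^d, the condition b + w(x) = 0 for all x ∉ H implies that w is a scalar multiple of v⊗a. -/
open MeasureTheory Finset

noncomputable section

namespace TracePaper

variable {ι : Type} [Fintype ι]
variable {E : Type} [AddCommGroup E] [Module ℝ E]

/-- A martingale adapted to the `ι`-uniform filtration, recorded by its values on atoms: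
`val n c` is the value of `F_n` on the atom determined by the digit string `c`. -/
structure Mart (ι : Type) [Fintype ι] (E : Type) [AddCommGroup E] [Module ℝ E] where
  val : (n : ℕ) → (Fin n → ι) → E
  avg_eq : ∀ (n : ℕ) (c : Fin n → ι),
    val n c = (Fintype.card ι : ℝ)⁻¹ • ∑ j : ι, val (n + 1) (Fin.snoc c j)

/-- The martingale difference `dF_{n+1}|_ω` on the atom `ω = c ∈ 𝒜ℱ_n`, as an element of
`V ⊗ E` (an `ι`-tuple with zero average). -/
def diff (F : Mart ι E) (n : ℕ) (c : Fin n → ι) : ι → E :=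
  fun j => F.val (n + 1) (Fin.snoc c j) - F.val n c

/-- `F ∈ 𝕎`: all martingale differences lie in `W`. -/
def MemSpace (W : Set (ι → E)) (F : Mart ι E) : Prop :=
  ∀ (n : ℕ) (c : Fin n → ι), diff F n c ∈ W

/-- A simple martingale: all but finitely many differences vanish. -/
def Simple (F : Mart ι E) : Prop :=
  ∃ N : ℕ, ∀ n, N ≤ n → ∀ c : Fin n → ι, diff F n c = 0

/-- Average of an `ι`-tuple. -/
def avg (X : ι → E) : E := (Fintype.card ι : ℝ)⁻¹ • ∑ j, X j

/-- The set `𝕄^W` of admissible `0`-flat increments. -/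
def MW (W : Set (ι → E)) : Set (ι → ℝ) :=
  {v | (∑ j, v j = 0) ∧ (∀ j, -1 ≤ v j) ∧ ∃ a : E, a ≠ 0 ∧ (fun j => v j • a) ∈ W}

/-- `κ_v(θ) = θ log((1/m) ∑_j |1+v_j|^{1/θ})`, extended by continuity at `θ = 0`. -/
def kappaV (ι : Type) [Fintype ι] (v : ι → ℝ) (θ : ℝ) : ℝ :=
  if θ = 0 then Real.log (⨆ j, |1 + v j|)
  else θ * Real.log ((Fintype.card ι : ℝ)⁻¹ * ∑ j, |1 + v j| ^ (1 / θ))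

/-- `κ(θ) = sup {κ_v(θ) : v ∈ 𝕄^W}`. -/
def kappa (W : Set (ι → E)) (θ : ℝ) : ℝ :=
  sSup {r | ∃ v ∈ MW W, r = kappaV ι v θ}

/-- `κ'(1) = inf { -(1/m) ∑_j (1+v_j) log(1+v_j) : v ∈ 𝕄^W }`. -/
def kprime1 (W : Set (ι → E)) : ℝ :=
  sInf {r | ∃ v ∈ MW W,
    r = -((Fintype.card ι : ℝ)⁻¹ * ∑ j, (1 + v j) * Real.log (1 + v j))}

/-- `W` is geometric (κ affine) with `α = -κ'(1)/log m`; equivalently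
`κ(θ) = α (log m)(1-θ)` on `[0,1]`. -/
def GeometricOfOrder (W : Set (ι → E)) (α : ℝ) : Prop :=
  ∀ θ ∈ Set.Icc (0 : ℝ) 1, kappa W θ = α * Real.log (Fintype.card ι) * (1 - θ)

/-- `w = v ⊗ a` is an extremal vector with support `H`. -/
def IsExtremal (W : Set (ι → E)) (α : ℝ) (w : ι → E) (H : Finset ι) : Prop :=
  w ∈ W ∧ ∃ a : E, a ≠ 0 ∧ (H.card : ℝ) = (Fintype.card ι : ℝ) ^ ((1 : ℝ) - α) ∧
    (∀ j ∈ H, w j = ((Fintype.card ι : ℝ) ^ α - 1) • a) ∧ ∀ j ∉ H, w j = -a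

/-- `φ` is a canceling operator. -/
def Canceling (W : Set (ι → E)) (α : ℝ) (φ : (ι → E) → ι → ℝ) : Prop :=
  ∀ (w : ι → E) (H : Finset ι), IsExtremal W α w H → ∀ j ∈ H, φ w j = 0

/-- `W` is a non-local space (of order `α`). -/
def NonLocal (W : Set (ι → E)) (α : ℝ) : Prop :=
  ∀ (w : ι → E) (H : Finset ι), IsExtremal W α w H →
    ∀ u ∈ W, ∀ b : E, (∀ j ∉ H, b + u j = 0) → ∃ c : ℝ, u = c • w

/-- The martingale transform `𝕀_α[F]`, as a function of the path `γ ∈ 𝕋`. -/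
def Ialpha (φ : (ι → E) → ι → ℝ) (α : ℝ) (F : Mart ι E) (γ : ℕ → ι) : ℝ :=
  ∑' n : ℕ, (Fintype.card ι : ℝ) ^ (-(α * n)) *
    φ (diff F n (fun i : Fin n => γ i)) (γ n)

/-- The cylinder (atom of `ℱ_n`) determined by the digit string `c`. -/
def cyl (n : ℕ) (c : Fin n → ι) : Set (ℕ → ι) := {γ | ∀ i : Fin n, γ i = c i}

/-- The Borel σ-algebra of `𝕋` (= the product σ-algebra). -/
def treeMS (ι : Type) : MeasurableSpace (ℕ → ι) :=
  @MeasurableSpace.pi ℕ (fun _ => ι) (fun _ => ⊤)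

section Normed
variable {E' : Type} [NormedAddCommGroup E'] [NormedSpace ℝ E']

/-- `‖F‖_{L¹} = sup_n 𝔼 |F_n|`. -/
def L1Norm (F : Mart ι E') : ℝ :=
  ⨆ n : ℕ, ((Fintype.card ι : ℝ) ^ n)⁻¹ * ∑ c : Fin n → ι, ‖F.val n c‖

/-- The bilinear trace inequality
`∫_𝕋 |𝕀_α[F]| dν ≲ (sup_{n,ω} m^{(1-α)n} ν(ω)) ‖F‖_{L¹}`. -/
def TraceIneq (W : Set (ι → E')) (φ : (ι → E') → ι → ℝ) (α : ℝ) : Prop :=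
  ∃ C : ℝ, ∀ ν : @Measure (ℕ → ι) (treeMS ι), IsFiniteMeasure ν →
    ∀ F : Mart ι E', MemSpace W F → Simple F →
      ∀ A : ℝ,
        (∀ (n : ℕ) (c : Fin n → ι),
          (Fintype.card ι : ℝ) ^ (((1 : ℝ) - α) * n) * (ν (cyl n c)).toReal ≤ A) →
        ∫ γ, |Ialpha φ α F γ| ∂ν ≤ C * A * L1Norm F

/-- The Bellman main inequality for `G` on the Bellman domain. -/
def MainInequality (W : Set (ι → E')) (φ : (ι → E') → ι → ℝ) (α : ℝ)
    (G : E' → ℝ → ℝ → ℝ → ℝ → ℝ) : Prop :=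
  ∀ (X : ι → E') (y : ℝ) (Z T S : ι → ℝ),
    (∀ j, ‖X j‖ ≤ Z j) → (∀ j, 0 ≤ T j) → (∀ j, T j ≤ S j) →
    (fun j => X j - avg X) ∈ W →
    (Fintype.card ι : ℝ) ^ (-α) *
        ∑ j, G (X j) ((Fintype.card ι : ℝ) ^ α * y + φ (fun i => X i - avg X) j)
          (Z j) (T j) (S j)
      ≤ G (avg X) y ((Fintype.card ι : ℝ)⁻¹ * ∑ j, Z j) (∑ j, T j)
          (max (∑ j, T j) ((Fintype.card ι : ℝ) ^ ((1 : ℝ) - α) * ⨆ j, S j))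

/-- The boundary inequality `G(x, y, |x|, t, s) ≥ |y| t`. -/
def BoundaryIneq (G : E' → ℝ → ℝ → ℝ → ℝ → ℝ) : Prop :=
  ∀ (x : E') (y t s : ℝ), 0 ≤ t → t ≤ s → |y| * t ≤ G x y ‖x‖ t s

/-- A supersolution: main inequality + boundary inequality. -/
def Supersolution (W : Set (ι → E')) (φ : (ι → E') → ι → ℝ) (α : ℝ)
    (G : E' → ℝ → ℝ → ℝ → ℝ → ℝ) : Prop :=
  MainInequality W φ α G ∧ BoundaryIneq G

end Normed

section GroupSetting

/-- The group `G = (ℤ/μ)^d`, identified with the branching index set `{1, …, m}`, `m = μ^d`. -/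
abbrev Gp (μ d : ℕ) : Type := Fin d → ZMod μ

/-- The character value `e^{2πi z/μ}` for `z ∈ ℤ/μ`. -/
def ch (μ : ℕ) (z : ZMod μ) : ℂ :=
  Complex.exp (2 * Real.pi * Complex.I * (z.val : ℂ) / (μ : ℂ))

/-- The standard generators `e_j` of `(ℤ/μ)^d`. -/
def egen (μ d : ℕ) (j : Fin d) : Gp μ d := Pi.single j 1

variable (μ d : ℕ) [NeZero μ]

/-- The martingale analogue `W_∇` of the space `BV(ℝ^d)`: discrete gradients of real-valued
functions on `G`. -/
def Wgrad : Set (Gp μ d → EuclideanSpace ℂ (Fin d)) :=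
  {g | (∑ x, g x = 0) ∧
    ∃ f : Gp μ d → ℝ, ∀ (x : Gp μ d) (j : Fin d),
      g x j = (f (x + egen μ d j) : ℂ) - (f x : ℂ)}

/-- The martingale analogue `W_div` of the space of divergence-free measures. -/
def Wdiv : Set (Gp μ d → EuclideanSpace ℂ (Fin d)) :=
  {g | (∑ x, g x = 0) ∧
    ∀ x : Gp μ d, ∑ j, (g (x + egen μ d j) j - g x j) = 0}

/-- The Hermitian inner product `⟨u, v⟩ = ∑_j conj(u_j) v_j` on `ℂ^d`. -/
def hermC (u v : EuclideanSpace ℂ (Fin d)) : ℂ :=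
  ∑ j, (starRingEnd ℂ) (u j) * v j

/-- The translation invariant (convolution) operator `φ[f](x) = ∑_y ⟨K(x-y), f(y)⟩`. -/
def convOp (K : Gp μ d → EuclideanSpace ℂ (Fin d))
    (f : Gp μ d → EuclideanSpace ℂ (Fin d)) (x : Gp μ d) : ℂ :=
  ∑ y, hermC d (K (x - y)) (f y)

end GroupSetting

section ComplexNonLocal

variable (μ d : ℕ) [NeZero μ]

/-- `v ⊗ a` is an extremal vector of `W ⊆ V ⊗ ℂ^d` (order `α`) with support `H ⊆ G`. -/
def IsExtremalC (W : Set (Gp μ d → EuclideanSpace ℂ (Fin d))) (α : ℝ)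
    (v : Gp μ d → ℝ) (a : EuclideanSpace ℂ (Fin d)) (H : Finset (Gp μ d)) : Prop :=
  a ≠ 0 ∧ (fun x => v x • a) ∈ W ∧
    (H.card : ℝ) = ((μ : ℝ) ^ d) ^ ((1 : ℝ) - α) ∧
    (∀ x ∈ H, v x = ((μ : ℝ) ^ d) ^ α - 1) ∧ ∀ x ∉ H, v x = -1

/-- `W` is non-local (of order `α`): if `b + w(x) = 0` off the support of an extremal vector
`v ⊗ a`, then `w` is a (complex) scalar multiple of `v ⊗ a`. -/
def NonLocalC (W : Set (Gp μ d → EuclideanSpace ℂ (Fin d))) (α : ℝ) : Prop :=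
  ∀ (v : Gp μ d → ℝ) (a : EuclideanSpace ℂ (Fin d)) (H : Finset (Gp μ d)),
    IsExtremalC μ d W α v a H →
    ∀ w ∈ W, ∀ b : EuclideanSpace ℂ (Fin d),
      (∀ x ∉ H, b + w x = 0) → ∃ c : ℂ, w = fun x => c • (v x • a)

end ComplexNonLocal

section Statement12Proof

variable {μ d : ℕ} [NeZero μ]

private lemma zmod_one_ne_zero (hμ : 2 ≤ μ) : (1 : ZMod μ) ≠ 0 := by
  haveI : Fact (1 < μ) := ⟨hμ⟩
  exact one_ne_zero

private lemma egen_apply (j i : Fin d) : egen μ d j i = if i = j then 1 else 0 :=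
  Pi.single_apply j 1 i

private lemma egen_self (j : Fin d) : egen μ d j j = 1 := by simp [egen_apply]

private lemma egen_ne' (j i : Fin d) (h : i ≠ j) : egen μ d j i = 0 := by
  simp [egen_apply, h]

private lemma egen_ne_zero (hμ : 2 ≤ μ) (j : Fin d) : egen μ d j ≠ 0 := fun h =>
  zmod_one_ne_zero hμ (by simpa [egen_self] using congrFun h j)

private lemma mu_smul (x : Gp μ d) : μ • x = 0 := by
  funext i
  show μ • x i = 0
  rw [nsmul_eq_mul, ZMod.natCast_self, zero_mul]

private lemma tele_sum (φ : Gp μ d → ℂ) (u x : Gp μ d) (n : ℕ) :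
    ∑ t ∈ Finset.range n, (φ (x + (t + 1) • u) - φ (x + t • u)) = φ (x + n • u) - φ x := by
  induction n with
  | zero => simp
  | succ n ih => rw [Finset.sum_range_succ, ih]; ring

private lemma tele_mu (φ : Gp μ d → ℂ) (u x : Gp μ d) :
    ∑ t ∈ Finset.range μ, (φ (x + (t + 1) • u) - φ (x + t • u)) = 0 := by
  rw [tele_sum, mu_smul, add_zero, sub_self]

private lemma euc_sum_apply {γ : Type} (s : Finset γ) (F : γ → EuclideanSpace ℂ (Fin d))
    (k : Fin d) : (∑ x ∈ s, F x) k = ∑ x ∈ s, F x k := by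
  classical
  induction s using Finset.cons_induction with
  | empty => simp
  | cons a s ha ih => rw [Finset.sum_cons, Finset.sum_cons, PiLp.add_apply, ih]

private lemma rpow_base (hd : 0 < d) (e : ℝ) (he : (d : ℝ) * e = (d : ℝ) - 1) :
    ((μ : ℝ) ^ d) ^ e = (μ : ℝ) ^ (d - 1) := by
  rw [← Real.rpow_natCast (μ : ℝ) d, ← Real.rpow_mul (Nat.cast_nonneg μ), he,
    ← Real.rpow_natCast (μ : ℝ) (d - 1)]
  congr 1
  rw [Nat.cast_sub hd, Nat.cast_one]

private lemma rpow_base1 (hd : 0 < d) (e : ℝ) (he : (d : ℝ) * e = 1) :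
    ((μ : ℝ) ^ d) ^ e = (μ : ℝ) := by
  rw [← Real.rpow_natCast (μ : ℝ) d, ← Real.rpow_mul (Nat.cast_nonneg μ), he, Real.rpow_one]

set_option maxHeartbeats 1000000 in
private lemma nonlocal_grad (μ d : ℕ) [NeZero μ] (hμ : 4 ≤ μ) (hd : 2 ≤ d) :
    NonLocalC μ d (Wgrad μ d) ((d : ℝ)⁻¹) := by
  classical
  have hμ2 : 2 ≤ μ := by omega
  have hμ0 : (μ : ℝ) ≠ 0 := Nat.cast_ne_zero.2 (by omega)
  have hμC : (μ : ℂ) ≠ 0 := Nat.cast_ne_zero.2 (by omega)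
  have hd0 : 0 < d := by omega
  have hdR : (d : ℝ) ≠ 0 := Nat.cast_ne_zero.2 (by omega)
  intro v a H hext w hw b hb
  obtain ⟨ha, hmem, hcard, hvin0, hvout⟩ := hext
  obtain ⟨-, f, hf⟩ := hmem
  set F : Gp μ d → ℂ := fun x => (f x : ℂ) with hF
  have hgrad : ∀ (x : Gp μ d) (j : Fin d),
      ((v x : ℝ) : ℂ) * a j = F (x + egen μ d j) - F x :=
    fun x j => by simpa [Complex.real_smul] using hf x j
  have hvin : ∀ x ∈ H, v x = (μ : ℝ) - 1 := by
    intro x hx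
    rw [hvin0 x hx, rpow_base1 hd0 _ (by field_simp)]
  have hHne : H.Nonempty := by
    rw [← Finset.card_pos]
    have h1 : (0 : ℝ) < ((μ:ℝ) ^ d) ^ ((1:ℝ) - (d:ℝ)⁻¹) :=
      Real.rpow_pos_of_pos (by positivity) _
    rw [← hcard] at h1
    exact_mod_cast h1
  -- each j-line (for a j ≠ 0) meets H exactly once
  have hNline : ∀ j : Fin d, a j ≠ 0 → ∀ x : Gp μ d,
      ((Finset.range μ).filter (fun t => x + t • egen μ d j ∈ H)).card = 1 := by
    intro j haj x
    have htele := tele_mu F (egen μ d j) x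
    have hterm : ∀ t ∈ Finset.range μ,
        F (x + (t + 1) • egen μ d j) - F (x + t • egen μ d j)
          = ((v (x + t • egen μ d j) : ℝ) : ℂ) * a j := by
      intro t _
      rw [show x + (t + 1) • egen μ d j = (x + t • egen μ d j) + egen μ d j from by
        rw [succ_nsmul, ← add_assoc]]
      exact (hgrad _ _).symm
    rw [Finset.sum_congr rfl hterm, ← Finset.sum_mul] at htele
    have hsv : (∑ t ∈ Finset.range μ, ((v (x + t • egen μ d j) : ℝ) : ℂ)) = 0 :=
      (mul_eq_zero.1 htele).resolve_right haj
    have hsv2 : (∑ t ∈ Finset.range μ, v (x + t • egen μ d j)) = 0 := by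
      exact_mod_cast hsv
    have hval : ∀ t ∈ Finset.range μ, v (x + t • egen μ d j)
        = (μ : ℝ) * (if x + t • egen μ d j ∈ H then 1 else 0) - 1 := by
      intro t _
      by_cases hmem' : x + t • egen μ d j ∈ H
      · rw [if_pos hmem', hvin _ hmem']; ring
      · rw [if_neg hmem', hvout _ hmem']; ring
    rw [Finset.sum_congr rfl hval, Finset.sum_sub_distrib, ← Finset.mul_sum,
      Finset.sum_boole, Finset.sum_const, Finset.card_range, nsmul_eq_mul, mul_one] at hsv2
    have h1 : (μ:ℝ) * ((((Finset.range μ).filter (fun t => x + t • egen μ d j ∈ H)).card : ℝ))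
        = (μ:ℝ) * 1 := by rw [mul_one]; linarith
    have h2 := mul_left_cancel₀ hμ0 h1
    exact_mod_cast h2
  have hC2 : ∀ j : Fin d, a j ≠ 0 → ∀ x ∈ H, ∀ t : ℕ, t < μ → t ≠ 0 →
      x + t • egen μ d j ∉ H := by
    intro j haj x hx t htμ ht0 hmem'
    have h1 := hNline j haj x
    have hsub : ({0, t} : Finset ℕ) ⊆ (Finset.range μ).filter
        (fun s => x + s • egen μ d j ∈ H) := by
      intro s hs
      rcases Finset.mem_insert.1 hs with rfl | hs
      · exact Finset.mem_filter.2 ⟨Finset.mem_range.2 (by omega), by simpa using hx⟩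
      · rw [Finset.mem_singleton] at hs
        subst hs
        exact Finset.mem_filter.2 ⟨Finset.mem_range.2 htμ, hmem'⟩
    have h2 := Finset.card_le_card hsub
    rw [Finset.card_pair (fun h => ht0 h.symm)] at h2
    omega
  have hC1 : ∀ j : Fin d, a j ≠ 0 → ∀ x ∈ H, x + egen μ d j ∉ H := by
    intro j haj x hx h'
    exact hC2 j haj x hx 1 (by omega) one_ne_zero (by simpa using h') 
  have curl : ∀ (x : Gp μ d) (j k : Fin d),
      (((v (x + egen μ d k) : ℝ) : ℂ) - ((v x : ℝ) : ℂ)) * a j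
        = (((v (x + egen μ d j) : ℝ) : ℂ) - ((v x : ℝ) : ℂ)) * a k := by
    intro x j k
    have h1 := hgrad x j
    have h2 := hgrad (x + egen μ d k) j
    have h3 := hgrad x k
    have h4 := hgrad (x + egen μ d j) k
    rw [add_right_comm x (egen μ d k) (egen μ d j)] at h2
    linear_combination h2 - h1 - h4 + h3
  obtain ⟨j0, hj0⟩ : ∃ j, a j ≠ 0 := by
    by_contra h
    push_neg at h
    exact ha (by ext j; simpa using h j)
  obtain ⟨x0, hx0⟩ := hHne
  have hAeq : ∀ j, a j ≠ 0 → a j = a j0 := by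
    intro j haj
    have hc := curl x0 j j0
    rw [hvout _ (hC1 j0 hj0 x0 hx0), hvout _ (hC1 j haj x0 hx0), hvin x0 hx0] at hc
    have hcoef : (((-1 : ℝ)) : ℂ) - (((μ:ℝ) - 1 : ℝ) : ℂ) ≠ 0 := by
      have he : (((-1 : ℝ)) : ℂ) - (((μ:ℝ) - 1 : ℝ) : ℂ) = -(μ:ℂ) := by push_cast; ring
      rw [he]
      exact neg_ne_zero.2 hμC
    exact mul_left_cancel₀ hcoef hc
  have hvmem : ∀ x y : Gp μ d, v x = v y → (x ∈ H ↔ y ∈ H) := by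
    intro x y hxy
    by_cases hxH : x ∈ H <;> by_cases hyH : y ∈ H
    · exact iff_of_true hxH hyH
    · exfalso
      rw [hvin x hxH, hvout y hyH] at hxy
      exact hμ0 (by linarith)
    · exfalso
      rw [hvout x hxH, hvin y hyH] at hxy
      exact hμ0 (by linarith)
    · exact iff_of_false hxH hyH
  have hInvK : ∀ k, a k = 0 → ∀ x : Gp μ d, x + egen μ d k ∈ H ↔ x ∈ H := by
    intro k hk x
    have hc := curl x j0 k
    rw [hk, mul_zero] at hc
    have h2 := (mul_eq_zero.1 hc).resolve_right hj0
    exact hvmem _ _ (Complex.ofReal_inj.1 (sub_eq_zero.1 h2))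
  have hInvJ : ∀ j, a j ≠ 0 → ∀ x : Gp μ d,
      x + (egen μ d j - egen μ d j0) ∈ H ↔ x ∈ H := by
    intro j haj x
    have hc := curl (x - egen μ d j0) j j0
    rw [hAeq j haj, sub_add_cancel] at hc
    have h2 := mul_right_cancel₀ hj0 hc
    have h3 : v x = v (x - egen μ d j0 + egen μ d j) :=
      Complex.ofReal_inj.1 (sub_left_inj.1 h2)
    rw [show x - egen μ d j0 + egen μ d j = x + (egen μ d j - egen μ d j0) from by abel] at h3
    exact (hvmem _ _ h3).symm
  -- the sigma function
  set σf : Gp μ d → ZMod μ := fun x => ∑ i : Fin d, if a i ≠ 0 then x i else 0 with hσf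
  have hσadd : ∀ x y : Gp μ d, σf (x + y) = σf x + σf y := by
    intro x y
    simp only [hσf]
    rw [← Finset.sum_add_distrib]
    refine Finset.sum_congr rfl fun i _ => ?_
    by_cases hi : a i ≠ 0 <;> simp [hi]
  have hσzero : σf 0 = 0 := by simp [hσf]
  have hσneg : ∀ x : Gp μ d, σf (-x) = - σf x := by
    intro x
    have h2 : σf x + σf (-x) = 0 := by rw [← hσadd, add_neg_cancel, hσzero]
    linear_combination h2
  have hσsub : ∀ x y : Gp μ d, σf (x - y) = σf x - σf y := by
    intro x y
    rw [sub_eq_add_neg, hσadd, hσneg, sub_eq_add_neg]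
  have hσsmul : ∀ (n : ℕ) (x : Gp μ d), σf (n • x) = n • σf x := by
    intro n x
    induction n with
    | zero => simpa using hσzero
    | succ n ih => rw [succ_nsmul, succ_nsmul, hσadd, ih]
  have hσe : ∀ j : Fin d, σf (egen μ d j) = if a j ≠ 0 then 1 else 0 := by
    intro j
    simp only [hσf]
    rw [Finset.sum_eq_single j]
    · rw [egen_self]
    · intro i _ hij
      rw [egen_ne' j i hij]
      simp
    · intro h
      exact absurd (Finset.mem_univ j) h
  -- invariance machinery
  have hInv0 : ∀ x : Gp μ d, x + (0 : Gp μ d) ∈ H ↔ x ∈ H := fun x => by rw [add_zero]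
  have hInvAdd : ∀ u u' : Gp μ d, (∀ x, x + u ∈ H ↔ x ∈ H) → (∀ x, x + u' ∈ H ↔ x ∈ H) →
      ∀ x, x + (u + u') ∈ H ↔ x ∈ H := by
    intro u u' h1 h2 x
    rw [← add_assoc]
    exact (h2 (x + u)).trans (h1 x)
  have hInvSmul : ∀ u : Gp μ d, (∀ x, x + u ∈ H ↔ x ∈ H) → ∀ n : ℕ,
      ∀ x, x + n • u ∈ H ↔ x ∈ H := by
    intro u h1 n
    induction n with
    | zero => intro x; simpa using hInv0 x
    | succ n ih =>
      intro x
      rw [succ_nsmul, ← add_assoc]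
      exact (h1 (x + n • u)).trans (ih x)
  have hInvSigma : ∀ z : Gp μ d, σf z = 0 → ∀ x, x + z ∈ H ↔ x ∈ H := by
    intro z hz
    have hdecomp : z = ∑ i : Fin d,
        (z i).val • (egen μ d i - (if a i ≠ 0 then egen μ d j0 else 0)) := by
      funext k
      rw [Finset.sum_apply]
      have hterm : ∀ i, ((z i).val • (egen μ d i - (if a i ≠ 0 then egen μ d j0 else 0))) k
          = z i * egen μ d i k - (if a i ≠ 0 then z i * egen μ d j0 k else 0) := by
        intro i
        rw [Pi.smul_apply, Pi.sub_apply, smul_sub, nsmul_eq_mul, nsmul_eq_mul,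
          ZMod.natCast_zmod_val]
        congr 1
        rw [apply_ite (fun g : Gp μ d => g k)]
        by_cases hi : a i ≠ 0 <;> simp [hi]
      rw [Finset.sum_congr rfl (fun i _ => hterm i), Finset.sum_sub_distrib]
      have h1 : ∑ i : Fin d, z i * egen μ d i k = z k := by
        rw [Finset.sum_eq_single k]
        · rw [egen_self, mul_one]
        · intro i _ hik
          rw [egen_ne' i k (Ne.symm hik), mul_zero]
        · intro h
          exact absurd (Finset.mem_univ k) h
      have h2 : ∑ i : Fin d, (if a i ≠ 0 then z i * egen μ d j0 k else 0)
          = (∑ i : Fin d, if a i ≠ 0 then z i else 0) * egen μ d j0 k := by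
        rw [Finset.sum_mul]
        refine Finset.sum_congr rfl fun i _ => ?_
        by_cases hi : a i ≠ 0 <;> simp [hi]
      have h3 : (∑ i : Fin d, if a i ≠ 0 then z i else 0) = σf z := by rw [hσf]
      rw [h1, h2, h3, hz, zero_mul, sub_zero]
    intro x
    rw [hdecomp]
    exact Finset.sum_induction _ (fun u => ∀ x, x + u ∈ H ↔ x ∈ H) hInvAdd
      (fun x => hInv0 x)
      (by
        intro i _
        apply hInvSmul
        by_cases hi : a i ≠ 0
        · rw [if_pos hi]
          exact hInvJ i hi
        · rw [if_neg hi, sub_zero]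
          push_neg at hi
          exact hInvK i hi) x
  have hσH : ∀ x ∈ H, σf x = σf x0 := by
    intro x' hx'
    by_contra hne
    set c : ZMod μ := σf x' - σf x0 with hc
    have hc0 : c ≠ 0 := fun h => hne (by rwa [sub_eq_zero] at h)
    have hzy : σf (x' - c.val • egen μ d j0 - x0) = 0 := by
      rw [hσsub, hσsub, hσsmul, hσe, if_pos hj0, nsmul_eq_mul, mul_one,
        ZMod.natCast_zmod_val, hc]
      ring
    have hy := hInvSigma _ hzy x0
    rw [show x0 + (x' - c.val • egen μ d j0 - x0) = x' - c.val • egen μ d j0 from by abel] at hy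
    have hyH : x' - c.val • egen μ d j0 ∈ H := hy.2 hx0
    have hx'2 : (x' - c.val • egen μ d j0) + c.val • egen μ d j0 ∈ H := by
      rw [sub_add_cancel]
      exact hx'
    exact hC2 j0 hj0 _ hyH c.val (ZMod.val_lt c)
      (fun h => hc0 ((ZMod.val_eq_zero c).1 h)) hx'2
  -- now the given element w of Wgrad
  obtain ⟨-, g, hg⟩ := hw
  set Gc : Gp μ d → ℂ := fun x => (g x : ℂ) with hGc
  have hwg : ∀ (x : Gp μ d) (j : Fin d), w x j = Gc (x + egen μ d j) - Gc x := hg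
  have hbj : ∀ x ∉ H, ∀ j, w x j = - b j := by
    intro x hx j
    have h1 := congrArg (fun z : EuclideanSpace ℂ (Fin d) => z j) (hb x hx)
    simp only [PiLp.add_apply, PiLp.zero_apply] at h1
    linear_combination h1
  have hnotH : ∀ y : Gp μ d, σf y ≠ σf x0 → y ∉ H := fun y hy hmem' => hy (hσH y hmem')
  have hM1 : ∀ k, a k = 0 → b k = 0 := by
    intro k hk
    have htele := tele_mu Gc (egen μ d k) (x0 + egen μ d j0)
    have hterm : ∀ t ∈ Finset.range μ,
        Gc (x0 + egen μ d j0 + (t + 1) • egen μ d k)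
          - Gc (x0 + egen μ d j0 + t • egen μ d k) = - b k := by
      intro t _
      rw [show x0 + egen μ d j0 + (t + 1) • egen μ d k
          = (x0 + egen μ d j0 + t • egen μ d k) + egen μ d k from by
        rw [succ_nsmul, ← add_assoc], ← hwg]
      apply hbj _ _ k
      apply hnotH
      rw [hσadd, hσadd, hσsmul, hσe, hσe, if_pos hj0, if_neg (not_not_intro hk),
        smul_zero, add_zero]
      intro hcontra
      exact zmod_one_ne_zero hμ2 (by linear_combination hcontra)
    rw [Finset.sum_congr rfl hterm, Finset.sum_const, Finset.card_range, nsmul_eq_mul] at htele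
    rcases mul_eq_zero.1 htele with h | h
    · exact absurd h hμC
    · exact neg_eq_zero.1 h
  have hM2 : ∀ j, a j ≠ 0 → b j = b j0 := by
    intro j haj
    set u : Gp μ d := egen μ d j - egen μ d j0 with hu
    have hσu : σf u = 0 := by
      rw [hu, hσsub, hσe, hσe, if_pos haj, if_pos hj0, sub_self]
    have htele : ∑ t ∈ Finset.range μ,
        (Gc (x0 - egen μ d j0 + (t + 1) • u + egen μ d j0)
          - Gc (x0 - egen μ d j0 + t • u + egen μ d j0)) = 0 :=
      tele_mu (fun z => Gc (z + egen μ d j0)) u (x0 - egen μ d j0)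
    have hterm : ∀ t ∈ Finset.range μ,
        Gc (x0 - egen μ d j0 + (t + 1) • u + egen μ d j0)
          - Gc (x0 - egen μ d j0 + t • u + egen μ d j0) = b j0 - b j := by
      intro t _
      have hyn : (x0 - egen μ d j0 + t • u) ∉ H := by
        apply hnotH
        rw [hσadd, hσsub, hσsmul, hσe, if_pos hj0, hσu, smul_zero, add_zero]
        intro hcontra
        exact zmod_one_ne_zero hμ2 (by linear_combination - hcontra)
      have e1 : x0 - egen μ d j0 + (t + 1) • u + egen μ d j0
          = (x0 - egen μ d j0 + t • u) + egen μ d j := by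
        rw [succ_nsmul, hu]
        abel
      have e2 : x0 - egen μ d j0 + t • u + egen μ d j0
          = (x0 - egen μ d j0 + t • u) + egen μ d j0 := by abel
      have w1 := hbj _ hyn j
      have w2 := hbj _ hyn j0
      rw [hwg] at w1 w2
      rw [e1, e2]
      linear_combination w1 - w2
    rw [Finset.sum_congr rfl hterm, Finset.sum_const, Finset.card_range, nsmul_eq_mul] at htele
    rcases mul_eq_zero.1 htele with h | h
    · exact absurd h hμC
    · exact (sub_eq_zero.1 h).symm
  have hM3 : ∀ j, a j ≠ 0 → ∀ x ∈ H, w x j = ((μ:ℂ) - 1) * b j0 := by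
    intro j haj x hx
    have htele := tele_mu Gc (egen μ d j) x
    have hterm : ∀ t ∈ Finset.range μ,
        Gc (x + (t + 1) • egen μ d j) - Gc (x + t • egen μ d j)
          = w (x + t • egen μ d j) j := by
      intro t _
      rw [succ_nsmul, ← add_assoc, ← hwg]
    rw [Finset.sum_congr rfl hterm] at htele
    have h0mem : (0:ℕ) ∈ Finset.range μ := Finset.mem_range.2 (by omega)
    rw [← Finset.add_sum_erase _ _ h0mem] at htele
    have hrest : ∀ t ∈ (Finset.range μ).erase 0, w (x + t • egen μ d j) j = - b j0 := by
      intro t ht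
      obtain ⟨ht0, htr⟩ := Finset.mem_erase.1 ht
      rw [hbj _ (hC2 j haj x hx t (Finset.mem_range.1 htr) ht0) j, hM2 j haj]
    rw [Finset.sum_congr rfl hrest, Finset.sum_const, Finset.card_erase_of_mem h0mem,
      Finset.card_range, zero_nsmul, add_zero, nsmul_eq_mul,
      Nat.cast_sub (by omega : 1 ≤ μ), Nat.cast_one] at htele
    linear_combination htele
  have hM4 : ∀ k, a k = 0 → ∀ x ∈ H, w x k = 0 := by
    intro k hk x hx
    have hs : σf x = σf x0 := hσH x hx
    have hx1 : x - egen μ d j0 ∉ H := by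
      apply hnotH
      rw [hσsub, hσe, if_pos hj0, hs]
      intro hcontra
      exact zmod_one_ne_zero hμ2 (by linear_combination - hcontra)
    have hx2 : x - egen μ d j0 + egen μ d k ∉ H := by
      apply hnotH
      rw [hσadd, hσsub, hσe, hσe, if_pos hj0, if_neg (not_not_intro hk), add_zero, hs]
      intro hcontra
      exact zmod_one_ne_zero hμ2 (by linear_combination - hcontra)
    have hid : w x k - w (x - egen μ d j0) k
        = w (x - egen μ d j0 + egen μ d k) j0 - w (x - egen μ d j0) j0 := by
      rw [hwg, hwg, hwg, hwg,
        show x - egen μ d j0 + egen μ d k + egen μ d j0 = x + egen μ d k from by abel,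
        show x - egen μ d j0 + egen μ d j0 = x from by abel]
      ring
    rw [hbj _ hx1 k, hbj _ hx2 j0, hbj _ hx1 j0, hM1 k hk] at hid
    linear_combination hid
  refine ⟨b j0 / a j0, ?_⟩
  funext x
  ext j
  rw [PiLp.smul_apply, PiLp.smul_apply, Complex.real_smul, smul_eq_mul]
  by_cases haj : a j = 0
  · rw [haj, mul_zero, mul_zero]
    by_cases hxH : x ∈ H
    · exact hM4 j haj x hxH
    · rw [hbj x hxH j, hM1 j haj, neg_zero]
  · rw [hAeq j haj]
    by_cases hxH : x ∈ H
    · rw [hM3 j haj x hxH, hvin x hxH]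
      push_cast
      field_simp
    · rw [hbj x hxH j, hM2 j haj, hvout x hxH]
      push_cast
      field_simp

set_option maxHeartbeats 1000000 in
private lemma nonlocal_div (μ d : ℕ) [NeZero μ] (hμ : 4 ≤ μ) (hd : 2 ≤ d) :
    NonLocalC μ d (Wdiv μ d) (((d : ℝ) - 1) / d) := by
  classical
  have hμ2 : 2 ≤ μ := by omega
  have hμ0 : (μ : ℝ) ≠ 0 := Nat.cast_ne_zero.2 (by omega)
  have hμC : (μ : ℂ) ≠ 0 := Nat.cast_ne_zero.2 (by omega)
  have hd0 : 0 < d := by omega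
  have hdR : (d : ℝ) ≠ 0 := Nat.cast_ne_zero.2 (by omega)
  have hμd1 : ((μ:ℂ)) ^ (d - 1) ≠ 0 := pow_ne_zero _ hμC
  intro v a H hext w hw b hb
  obtain ⟨ha, hmem, hcard, hvin0, hvout⟩ := hext
  obtain ⟨-, hdivm⟩ := hmem
  -- basic facts
  have hcardμ : H.card = μ := by
    have h1 : (H.card : ℝ) = (μ : ℝ) := by
      rw [hcard, rpow_base1 hd0 _ (by field_simp; ring)]
    exact_mod_cast h1
  set χ : Gp μ d → ℂ := fun y => if y ∈ H then 1 else 0 with hχ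
  have hχ1 : ∀ y ∈ H, χ y = 1 := fun y hy => by simp only [hχ]; rw [if_pos hy]
  have hχ0' : ∀ y ∉ H, χ y = 0 := fun y hy => by simp only [hχ]; rw [if_neg hy]
  have hvinC : ∀ y ∈ H, ((v y : ℝ) : ℂ) = (μ:ℂ) ^ (d-1) - 1 := by
    intro y hy
    rw [hvin0 y hy, rpow_base hd0 _ (by field_simp)]
    push_cast
    ring
  have hvχ : ∀ y : Gp μ d, ((v y : ℝ) : ℂ) = (μ:ℂ) ^ (d-1) * χ y - 1 := by
    intro y
    by_cases hy : y ∈ H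
    · rw [hχ1 y hy, mul_one, hvinC y hy]
    · rw [hχ0' y hy, mul_zero, hvout y hy]
      push_cast
      ring
  have hdiv' : ∀ x : Gp μ d, ∑ j, (χ (x + egen μ d j) - χ x) * a j = 0 := by
    intro x
    have h0 := hdivm x
    have h1 : ∑ j, ((v (x + egen μ d j) • a) j - (v x • a) j)
        = (μ:ℂ) ^ (d-1) * ∑ j, (χ (x + egen μ d j) - χ x) * a j := by
      rw [Finset.mul_sum]
      refine Finset.sum_congr rfl fun j _ => ?_
      rw [PiLp.smul_apply, PiLp.smul_apply, Complex.real_smul, Complex.real_smul,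
        hvχ (x + egen μ d j), hvχ x]
      ring
    rw [h1] at h0
    exact (mul_eq_zero.1 h0).resolve_left hμd1
  -- fiber counting
  set fib : Fin d → ZMod μ → Finset (Gp μ d) :=
    fun j t => Finset.univ.filter (fun x : Gp μ d => x j = t) with hfib
  set S : Fin d → ZMod μ → ℂ := fun j t => ∑ x ∈ fib j t, χ x with hS
  have hshift : ∀ (j k : Fin d) (t : ZMod μ),
      ∑ x ∈ fib j t, χ (x + egen μ d k) = S j (t + egen μ d k j) := by
    intro j k t
    simp only [hS]
    refine Finset.sum_nbij' (fun x => x + egen μ d k) (fun x => x - egen μ d k)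
      ?_ ?_ ?_ ?_ ?_
    · intro x hx
      simp only [hfib, Finset.mem_filter, Finset.mem_univ, true_and] at hx ⊢
      show x j + egen μ d k j = t + egen μ d k j
      rw [hx]
    · intro x hx
      simp only [hfib, Finset.mem_filter, Finset.mem_univ, true_and] at hx ⊢
      show x j - egen μ d k j = t
      rw [hx]
      ring
    · intro x _
      exact add_sub_cancel_right _ _
    · intro x _
      exact sub_add_cancel _ _
    · intro x _
      rfl
  have hSstep : ∀ j : Fin d, a j ≠ 0 → ∀ t, S j (t + 1) = S j t := by
    intro j haj t
    have h0 : ∑ x ∈ fib j t, ∑ k, (χ (x + egen μ d k) - χ x) * a k = 0 :=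
      Finset.sum_eq_zero fun x _ => hdiv' x
    rw [Finset.sum_comm] at h0
    have hterm : ∀ k : Fin d, ∑ x ∈ fib j t, (χ (x + egen μ d k) - χ x) * a k
        = (S j (t + egen μ d k j) - S j t) * a k := by
      intro k
      rw [← Finset.sum_mul]
      congr 1
      rw [Finset.sum_sub_distrib, hshift j k t]
    rw [Finset.sum_congr rfl (fun k _ => hterm k)] at h0
    rw [Finset.sum_eq_single j] at h0
    · rw [egen_self] at h0
      rcases mul_eq_zero.1 h0 with h | h
      · exact sub_eq_zero.1 h
      · exact absurd h haj
    · intro k _ hkj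
      rw [egen_ne' k j (Ne.symm hkj), add_zero, sub_self, zero_mul]
    · intro h
      exact absurd (Finset.mem_univ j) h
  have hSconst : ∀ j : Fin d, a j ≠ 0 → ∀ t, S j t = S j 0 := by
    intro j haj t
    have hn : ∀ n : ℕ, S j ((n : ℕ) : ZMod μ) = S j 0 := by
      intro n
      induction n with
      | zero => norm_num
      | succ n ih =>
        rw [show ((n+1 : ℕ) : ZMod μ) = ((n:ℕ):ZMod μ) + 1 from by push_cast; ring,
          hSstep j haj, ih]
    rw [← ZMod.natCast_zmod_val t, hn]
  have hStot : ∀ j : Fin d, ∑ t : ZMod μ, S j t = (μ : ℂ) := by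
    intro j
    have h1 : ∑ t : ZMod μ, S j t = ∑ x : Gp μ d, χ x := by
      simp only [hS, hfib]
      exact Finset.sum_fiberwise _ _ _
    rw [h1]
    simp only [hχ]
    rw [Finset.sum_boole, Finset.filter_univ_mem, hcardμ]
  have hS1 : ∀ j : Fin d, a j ≠ 0 → ∀ t, S j t = 1 := by
    intro j haj t
    have h1 : ∑ t : ZMod μ, S j t = μ • S j 0 := by
      rw [Finset.sum_congr rfl (fun t _ => hSconst j haj t), Finset.sum_const,
        Finset.card_univ, ZMod.card]
    rw [hStot, nsmul_eq_mul] at h1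
    have h3 : (μ:ℂ) * S j 0 = (μ:ℂ) * 1 := by rw [mul_one, ← h1]
    rw [hSconst j haj t]
    exact mul_left_cancel₀ hμC h3
  have hcard1 : ∀ j : Fin d, a j ≠ 0 → ∀ t : ZMod μ,
      ((fib j t).filter (fun x => x ∈ H)).card = 1 := by
    intro j haj t
    have h2 : (∑ x ∈ fib j t, if x ∈ H then (1:ℂ) else 0)
        = (((fib j t).filter (fun x => x ∈ H)).card : ℂ) := Finset.sum_boole _ _
    have h3 : (((fib j t).filter (fun x => x ∈ H)).card : ℂ) = 1 := by
      rw [← h2]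
      exact hS1 j haj t
    exact_mod_cast h3
  have hTwo : ∀ k : Fin d, a k ≠ 0 → ∀ y z : Gp μ d, y ∈ H → z ∈ H → y ≠ z →
      y k = z k → False := by
    intro k hak y z hy hz hyz hco
    have h1 := hcard1 k hak (z k)
    have hsub : ({y, z} : Finset (Gp μ d)) ⊆ (fib k (z k)).filter (fun x => x ∈ H) := by
      intro s hs
      rcases Finset.mem_insert.1 hs with rfl | hs
      · exact Finset.mem_filter.2 ⟨by
          simp only [hfib, Finset.mem_filter, Finset.mem_univ, true_and]
          exact hco, hy⟩
      · rw [Finset.mem_singleton] at hs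
        subst hs
        exact Finset.mem_filter.2 ⟨by
          simp only [hfib, Finset.mem_filter, Finset.mem_univ, true_and], hz⟩
    have h2 := Finset.card_le_card hsub
    rw [Finset.card_pair hyz] at h2
    omega
  -- choose j0 and the parametrization p
  obtain ⟨j0, hj0⟩ : ∃ j, a j ≠ 0 := by
    by_contra h
    push_neg at h
    exact ha (by ext j; simpa using h j)
  have hexu : ∀ t : ZMod μ, ∃ y : Gp μ d, (y ∈ H ∧ y j0 = t) ∧
      ∀ z : Gp μ d, z ∈ H → z j0 = t → z = y := by
    intro t
    obtain ⟨y, hy⟩ := Finset.card_eq_one.1 (hcard1 j0 hj0 t)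
    have hymem : y ∈ (fib j0 t).filter (fun x => x ∈ H) := by
      rw [hy]
      exact Finset.mem_singleton_self y
    simp only [hfib, Finset.mem_filter, Finset.mem_univ, true_and] at hymem
    refine ⟨y, ⟨hymem.2, hymem.1⟩, ?_⟩
    intro z hz1 hz2
    have hzmem : z ∈ (fib j0 t).filter (fun x => x ∈ H) := by
      simp only [hfib, Finset.mem_filter, Finset.mem_univ, true_and]
      exact ⟨hz2, hz1⟩
    rw [hy] at hzmem
    exact Finset.mem_singleton.1 hzmem
  choose p hp hpu using hexu
  have hpH : ∀ t, p t ∈ H := fun t => (hp t).1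
  have hpc : ∀ t, p t j0 = t := fun t => (hp t).2
  have hxup : ∀ x ∈ H, x = p (x j0) := fun x hx => hpu (x j0) x hx rfl
  have hD2 : ∀ x ∈ H, ∀ i, i ≠ j0 → x + egen μ d i ∉ H := by
    intro x hx i hi hmem'
    have h1 : (x + egen μ d i) j0 = x j0 := by
      show x j0 + egen μ d i j0 = x j0
      rw [egen_ne' i j0 (Ne.symm hi), add_zero]
    have h2 := hpu (x j0) _ hmem' h1
    have h3 := hxup x hx
    have h4 : x + egen μ d i = x := h2.trans h3.symm
    exact egen_ne_zero hμ2 i (add_eq_left.1 h4)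
  have hD3 : ∀ t, χ (p t + egen μ d j0) * a j0 = ∑ k, a k := by
    intro t
    have h0 := hdiv' (p t)
    have hterm : ∀ k : Fin d, (χ (p t + egen μ d k) - χ (p t)) * a k
        = (if k = j0 then χ (p t + egen μ d j0) * a k else 0) - a k := by
      intro k
      rw [hχ1 (p t) (hpH t)]
      by_cases hk : k = j0
      · subst hk
        rw [if_pos rfl]
        ring
      · rw [if_neg hk, hχ0' _ (hD2 (p t) (hpH t) k hk)]
        ring
    rw [Finset.sum_congr rfl (fun k _ => hterm k), Finset.sum_sub_distrib,
      Finset.sum_ite_eq' Finset.univ j0 (fun k => χ (p t + egen μ d j0) * a k),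
      if_pos (Finset.mem_univ j0)] at h0
    linear_combination h0
  -- the w-side setup
  obtain ⟨hwsum, hwdiv⟩ := hw
  set u : Gp μ d → EuclideanSpace ℂ (Fin d) := fun x => b + w x with hu
  have hu0 : ∀ x ∉ H, ∀ k, u x k = 0 := by
    intro x hx k
    simp only [hu]
    rw [hb x hx]
    rfl
  have hudiv : ∀ x, ∑ k, (u (x + egen μ d k) k - u x k) = 0 := by
    intro x
    have h0 := hwdiv x
    rw [← h0]
    refine Finset.sum_congr rfl fun k _ => ?_
    simp only [hu, PiLp.add_apply]
    ring
  have hwub : ∀ (x : Gp μ d) (k : Fin d), w x k = u x k - b k := by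
    intro x k
    simp only [hu, PiLp.add_apply]
    ring
  have hcG : Fintype.card (Gp μ d) = μ ^ d := by
    rw [Fintype.card_fun, ZMod.card, Fintype.card_fin]
  have hbk : ∀ k, ((μ:ℂ)) ^ d * b k = ∑ x ∈ H, u x k := by
    intro k
    have hws : ∑ x : Gp μ d, w x k = 0 := by
      rw [← euc_sum_apply, hwsum]
      rfl
    have h1 : ∑ x : Gp μ d, u x k = ∑ x : Gp μ d, (b k + w x k) :=
      Finset.sum_congr rfl (fun x _ => by simp only [hu, PiLp.add_apply])
    have h2 : ∑ x : Gp μ d, u x k = ∑ x ∈ H, u x k := by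
      symm
      apply Finset.sum_subset (Finset.subset_univ H)
      intro x _ hx
      exact hu0 x hx k
    rw [← h2, h1, Finset.sum_add_distrib, hws, add_zero, Finset.sum_const,
      Finset.card_univ, hcG, nsmul_eq_mul]
    push_cast
    ring
  -- main case split
  by_cases hcase : p 0 + egen μ d j0 ∈ H
  · -- CASE A : H is a line in direction j0
    have hAl : ∀ t, p t + egen μ d j0 = p (t + 1) := by
      intro t
      have h1 : χ (p t + egen μ d j0) * a j0 = χ (p 0 + egen μ d j0) * a j0 := by
        rw [hD3, hD3]
      rw [hχ1 _ hcase] at h1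
      have h2 : χ (p t + egen μ d j0) = 1 := mul_right_cancel₀ hj0 h1
      have h3 : p t + egen μ d j0 ∈ H := by
        by_contra h'
        rw [hχ0' _ h'] at h2
        exact one_ne_zero h2.symm
      refine hpu (t+1) _ h3 ?_
      show p t j0 + egen μ d j0 j0 = t + 1
      rw [hpc, egen_self]
    have hrecA : ∀ n : ℕ, p ((n : ZMod μ)) = p 0 + n • egen μ d j0 := by
      intro n
      induction n with
      | zero => simp
      | succ n ih =>
        rw [show ((n+1 : ℕ) : ZMod μ) = ((n:ℕ) : ZMod μ) + 1 from by push_cast; ring,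
          ← hAl, ih, succ_nsmul, add_assoc]
    have hpt : ∀ t : ZMod μ, p t = p 0 + (t.val) • egen μ d j0 := by
      intro t
      rw [← hrecA t.val, ZMod.natCast_zmod_val]
    have hazA : ∀ i, i ≠ j0 → a i = 0 := by
      intro i hi
      by_contra hai
      have hp1 : p (1 : ZMod μ) = p 0 + egen μ d j0 := by
        have := hAl 0
        rw [zero_add] at this
        exact this.symm
      have hneq : p (1 : ZMod μ) ≠ p 0 := by
        rw [hp1]
        intro h
        exact egen_ne_zero hμ2 j0 (add_eq_left.1 h)
      have hco : p (1 : ZMod μ) i = p 0 i := by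
        rw [hp1]
        show p 0 i + egen μ d j0 i = p 0 i
        rw [egen_ne' j0 i hi, add_zero]
      exact hTwo i hai (p 1) (p 0) (hpH 1) (hpH 0) hneq hco
    have hmemA : ∀ x : Gp μ d, x ∈ H ↔ ∀ i, i ≠ j0 → x i = p 0 i := by
      intro x
      constructor
      · intro hx i hi
        rw [hxup x hx, hpt]
        show p 0 i + (x j0).val • egen μ d j0 i = p 0 i
        rw [egen_ne' j0 i hi, smul_zero, add_zero]
      · intro hco
        have hxx : x = p (x j0) := by
          rw [hpt]
          funext i
          by_cases hi : i = j0
          · rw [hi]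
            show x j0 = p 0 j0 + (x j0).val • egen μ d j0 j0
            rw [hpc, egen_self, zero_add, nsmul_eq_mul, mul_one, ZMod.natCast_zmod_val]
          · show x i = p 0 i + (x j0).val • egen μ d j0 i
            rw [egen_ne' j0 i hi, smul_zero, add_zero]
            exact hco i hi
        rw [hxx]
        exact hpH _
    have hA1 : ∀ y ∈ H, ∀ k, k ≠ j0 → u y k = 0 := by
      intro y hy k hk
      have hyk : y k = p 0 k := (hmemA y).1 hy k hk
      have hx1 : y - egen μ d k ∉ H := by
        intro hmem'
        have h1 := (hmemA _).1 hmem' k hk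
        rw [show (y - egen μ d k) k = y k - 1 from by
          show y k - egen μ d k k = _
          rw [egen_self], hyk] at h1
        exact zmod_one_ne_zero hμ2 (by linear_combination - h1)
      have hdx := hudiv (y - egen μ d k)
      rw [Finset.sum_eq_single k] at hdx
      · rw [sub_add_cancel, hu0 _ hx1 k] at hdx
        linear_combination hdx
      · intro i _ hik
        have hn1 : y - egen μ d k + egen μ d i ∉ H := by
          intro hmem'
          have h1 := (hmemA _).1 hmem' k hk
          rw [show (y - egen μ d k + egen μ d i) k = y k - 1 from by
            show y k - egen μ d k k + egen μ d i k = _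
            rw [egen_self, egen_ne' i k (Ne.symm hik), add_zero], hyk] at h1
          exact zmod_one_ne_zero hμ2 (by linear_combination - h1)
        rw [hu0 _ hn1 i, hu0 _ hx1 i, sub_zero]
      · intro h
        exact absurd (Finset.mem_univ k) h
    have hA2 : ∀ y ∈ H, u (y + egen μ d j0) j0 = u y j0 := by
      intro y hy
      have hdx := hudiv y
      rw [Finset.sum_eq_single j0] at hdx
      · linear_combination hdx
      · intro i _ hij
        rw [hu0 _ (hD2 y hy i hij) i, hA1 y hy i hij, sub_zero]
      · intro h
        exact absurd (Finset.mem_univ j0) h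
    have hA3 : ∀ y ∈ H, u y j0 = u (p 0) j0 := by
      intro y hy
      have hind : ∀ n : ℕ, u (p 0 + n • egen μ d j0) j0 = u (p 0) j0 := by
        intro n
        induction n with
        | zero => simp
        | succ n ih =>
          have hmem' : p 0 + n • egen μ d j0 ∈ H := by
            rw [← hrecA n]
            exact hpH _
          rw [succ_nsmul, ← add_assoc, hA2 _ hmem', ih]
      rw [hxup y hy, hpt]
      exact hind _
    set lam : ℂ := u (p 0) j0 with hlam
    have hbj0' : (μ:ℂ) ^ (d-1) * b j0 = lam := by
      have h1 := hbk j0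
      have h2 : ∑ x ∈ H, u x j0 = (μ:ℂ) * lam := by
        rw [Finset.sum_congr rfl (fun x hx => hA3 x hx), Finset.sum_const, hcardμ,
          nsmul_eq_mul]
      rw [h2] at h1
      have h3 : (μ:ℂ) * ((μ:ℂ) ^ (d-1) * b j0) = (μ:ℂ) * lam := by
        rw [← h1]
        rw [show (μ:ℂ) ^ d = (μ:ℂ) * (μ:ℂ) ^ (d-1) from by
          rw [← pow_succ']
          congr 1
          omega]
        ring
      exact mul_left_cancel₀ hμC h3
    have hbk0 : ∀ k, k ≠ j0 → b k = 0 := by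
      intro k hk
      have h1 := hbk k
      rw [Finset.sum_eq_zero (fun x hx => hA1 x hx k hk)] at h1
      exact (mul_eq_zero.1 h1).resolve_left (pow_ne_zero _ hμC)
    have hbj0 : b j0 = lam / (μ:ℂ) ^ (d-1) := by
      rw [eq_div_iff hμd1]
      linear_combination hbj0'
    refine ⟨lam / ((μ:ℂ) ^ (d-1) * a j0), ?_⟩
    funext x
    ext j
    rw [PiLp.smul_apply, PiLp.smul_apply, Complex.real_smul, smul_eq_mul, hwub]
    by_cases hjj : j = j0
    · rw [hjj]
      by_cases hxH : x ∈ H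
      · rw [hA3 x hxH, hvinC x hxH, hbj0]
        field_simp
      · rw [hu0 x hxH j0, hvout x hxH, hbj0]
        push_cast
        field_simp
        try ring
    · rw [hazA j hjj, mul_zero, mul_zero, hbk0 j hjj, sub_zero]
      by_cases hxH : x ∈ H
      · exact hA1 x hxH j hjj
      · exact hu0 x hxH j
  · -- CASE B : H is a diagonal line in directions j0, j1
    have hNever : ∀ t, p t + egen μ d j0 ∉ H := by
      intro t hmem'
      have h1 : χ (p t + egen μ d j0) * a j0 = χ (p 0 + egen μ d j0) * a j0 := by
        rw [hD3, hD3]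
      rw [hχ1 _ hmem', hχ0' _ hcase, one_mul, zero_mul] at h1
      exact hj0 h1
    have hA0 : (∑ k, a k) = 0 := by
      rw [← hD3 0, hχ0' _ hcase, zero_mul]
    have hxt : ∀ t, p t - egen μ d j0 ∉ H := by
      intro t hmem'
      have hco : (p t - egen μ d j0) j0 = t - 1 := by
        show p t j0 - egen μ d j0 j0 = t - 1
        rw [hpc, egen_self]
      have h1 := hpu (t-1) _ hmem' hco
      have h2 : p (t-1) + egen μ d j0 = p t := by
        rw [← h1, sub_add_cancel]
      exact hNever (t-1) (h2 ▸ hpH t)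
    have hstep : ∀ t : ZMod μ, ∃ i : Fin d, i ≠ j0 ∧
        p t = p (t - 1) + egen μ d j0 - egen μ d i ∧ a i = - a j0 := by
      intro t
      have h0 := hdiv' (p t - egen μ d j0)
      have h1 : ∑ k, χ (p t - egen μ d j0 + egen μ d k) * a k = 0 := by
        rw [← h0]
        refine Finset.sum_congr rfl fun k _ => ?_
        rw [hχ0' _ (hxt t)]
        ring
      rw [← Finset.add_sum_erase _ _ (Finset.mem_univ j0),
        show p t - egen μ d j0 + egen μ d j0 = p t from sub_add_cancel _ _,
        hχ1 _ (hpH t), one_mul] at h1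
      by_cases hex : ∃ k, k ≠ j0 ∧ p t - egen μ d j0 + egen μ d k ∈ H
      · obtain ⟨i, hi, hiH⟩ := hex
        have hco : (p t - egen μ d j0 + egen μ d i) j0 = t - 1 := by
          show p t j0 - egen μ d j0 j0 + egen μ d i j0 = t - 1
          rw [hpc, egen_self, egen_ne' i j0 (Ne.symm hi), add_zero]
        have heq := hpu (t-1) _ hiH hco
        refine ⟨i, hi, by rw [← heq]; abel, ?_⟩
        have hrest : ∑ k ∈ Finset.univ.erase j0,
            χ (p t - egen μ d j0 + egen μ d k) * a k = a i := by
          rw [Finset.sum_eq_single i]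
          · rw [hχ1 _ hiH, one_mul]
          · intro k hk hki
            have hk0 : k ≠ j0 := (Finset.mem_erase.1 hk).1
            have hnm : p t - egen μ d j0 + egen μ d k ∉ H := by
              intro hmem'
              have hcok : (p t - egen μ d j0 + egen μ d k) j0 = t - 1 := by
                show p t j0 - egen μ d j0 j0 + egen μ d k j0 = t - 1
                rw [hpc, egen_self, egen_ne' k j0 (Ne.symm hk0), add_zero]
              have heqk := hpu (t-1) _ hmem' hcok
              have hek : egen μ d k = egen μ d i := add_left_cancel (heqk.trans heq.symm)
              have h5 := congrFun hek k
              rw [egen_self, egen_apply] at h5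
              by_cases hki' : k = i
              · exact hki hki'
              · rw [if_neg hki'] at h5
                exact zmod_one_ne_zero hμ2 h5
            rw [hχ0' _ hnm, zero_mul]
          · intro h
            exact absurd (Finset.mem_erase.2 ⟨hi, Finset.mem_univ i⟩) h
        rw [hrest] at h1
        linear_combination h1
      · exfalso
        push_neg at hex
        have hrest : ∑ k ∈ Finset.univ.erase j0,
            χ (p t - egen μ d j0 + egen μ d k) * a k = 0 := by
          apply Finset.sum_eq_zero
          intro k hk
          rw [hχ0' _ (hex k (Finset.mem_erase.1 hk).1), zero_mul]
        rw [hrest, add_zero] at h1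
        exact hj0 h1
    choose I hI1 hI2 hI3 using hstep
    have hIconst : ∀ t, I t = I 0 := by
      by_contra hne
      push_neg at hne
      obtain ⟨t1, ht1⟩ := hne
      have hsum : ∑ t : ZMod μ, p (t - 1) (I 0) = ∑ t : ZMod μ, p t (I 0) :=
        Fintype.sum_equiv (Equiv.subRight (1 : ZMod μ)) _ _ (fun t => rfl)
      have hterm : ∀ t : ZMod μ, p t (I 0)
          = p (t-1) (I 0) - (if I 0 = I t then 1 else 0) := by
        intro t
        conv_lhs => rw [hI2 t]
        show p (t-1) (I 0) + egen μ d j0 (I 0) - egen μ d (I t) (I 0) = _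
        rw [egen_ne' j0 (I 0) (hI1 0), add_zero, egen_apply]
      have hsum2 : ∑ t : ZMod μ, (if I 0 = I t then (1 : ZMod μ) else 0) = 0 := by
        have h1 : ∑ t : ZMod μ, p t (I 0)
            = ∑ t : ZMod μ, (p (t-1) (I 0) - (if I 0 = I t then 1 else 0)) :=
          Finset.sum_congr rfl (fun t _ => hterm t)
        rw [Finset.sum_sub_distrib, hsum] at h1
        linear_combination h1
      rw [Finset.sum_boole] at hsum2
      have hdvd : μ ∣ (Finset.univ.filter fun t : ZMod μ => I 0 = I t).card := by
        rwa [ZMod.natCast_eq_zero_iff] at hsum2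
      have hle : (Finset.univ.filter fun t : ZMod μ => I 0 = I t).card ≤ μ := by
        calc (Finset.univ.filter fun t : ZMod μ => I 0 = I t).card
            ≤ (Finset.univ : Finset (ZMod μ)).card := Finset.card_filter_le _ _
          _ = μ := by rw [Finset.card_univ, ZMod.card]
      have hlt : (Finset.univ.filter fun t : ZMod μ => I 0 = I t).card < μ := by
        apply lt_of_le_of_ne hle
        intro hEq
        have huniv : (Finset.univ.filter fun t : ZMod μ => I 0 = I t) = Finset.univ := by
          apply Finset.eq_univ_of_card
          rw [hEq, ZMod.card]
        have ht1mem := (Finset.eq_univ_iff_forall.1 huniv) t1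
        exact ht1 ((Finset.mem_filter.1 ht1mem).2).symm
      have hpos : 0 < (Finset.univ.filter fun t : ZMod μ => I 0 = I t).card :=
        Finset.card_pos.2 ⟨0, Finset.mem_filter.2 ⟨Finset.mem_univ _, rfl⟩⟩
      have := Nat.le_of_dvd hpos hdvd
      omega
    set j1 : Fin d := I 0 with hj1def
    have hj1 : j1 ≠ j0 := hI1 0
    have haj1 : a j1 = - a j0 := hI3 0
    set ww : Gp μ d := egen μ d j0 - egen μ d j1 with hww
    have hwwj0 : ww j0 = 1 := by
      simp only [hww]
      show egen μ d j0 j0 - egen μ d j1 j0 = 1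
      rw [egen_self, egen_ne' j1 j0 (Ne.symm hj1), sub_zero]
    have hwwj1 : ww j1 = -1 := by
      simp only [hww]
      show egen μ d j0 j1 - egen μ d j1 j1 = -1
      rw [egen_self, egen_ne' j0 j1 hj1, zero_sub]
    have hwwk : ∀ k, k ≠ j0 → k ≠ j1 → ww k = 0 := by
      intro k h0 h1
      simp only [hww]
      show egen μ d j0 k - egen μ d j1 k = 0
      rw [egen_ne' j0 k h0, egen_ne' j1 k h1, sub_zero]
    have hrecB : ∀ t, p t = p (t - 1) + ww := by
      intro t
      conv_lhs => rw [hI2 t, hIconst t]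
      simp only [hww]
      abel
    have hrecBn : ∀ (n : ℕ) (t : ZMod μ), p (t + n) = p t + n • ww := by
      intro n
      induction n with
      | zero => intro t; simp
      | succ n ih =>
        intro t
        calc p (t + ((n+1 : ℕ) : ZMod μ)) = p ((t + n) + 1) := by
              rw [show ((n+1 : ℕ) : ZMod μ) = ((n:ℕ):ZMod μ) + 1 from by push_cast; ring,
                add_assoc]
          _ = p ((t + n) + 1 - 1) + ww := hrecB _
          _ = p (t + n) + ww := by rw [add_sub_cancel_right]
          _ = p t + n • ww + ww := by rw [ih]
          _ = p t + (n+1) • ww := by rw [succ_nsmul, add_assoc]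
    have hptB : ∀ t : ZMod μ, p t = p 0 + t.val • ww := by
      intro t
      have h1 := hrecBn t.val 0
      rw [zero_add, ZMod.natCast_zmod_val] at h1
      exact h1
    have hazB : ∀ k, k ≠ j0 → k ≠ j1 → a k = 0 := by
      intro k hk0 hk1
      by_contra hak
      have hp1 : p (1 : ZMod μ) = p 0 + ww := by
        have := hrecB 1
        rw [sub_self] at this
        exact this
      have hneq : p (1 : ZMod μ) ≠ p 0 := by
        rw [hp1]
        intro h
        have h2 := congrFun (add_eq_left.1 h) j0
        rw [hwwj0] at h2
        exact zmod_one_ne_zero hμ2 h2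
      have hcok : p (1 : ZMod μ) k = p 0 k := by
        rw [hp1]
        show p 0 k + ww k = p 0 k
        rw [hwwk k hk0 hk1, add_zero]
      exact hTwo k hak (p 1) (p 0) (hpH 1) (hpH 0) hneq hcok
    have hmemB : ∀ x : Gp μ d, x ∈ H ↔
        (x j0 + x j1 = p 0 j1 ∧ ∀ k, k ≠ j0 → k ≠ j1 → x k = p 0 k) := by
      intro x
      constructor
      · intro hx
        have hx' : x = p 0 + (x j0).val • ww := by
          have h0 := hptB (x j0)
          rw [← hxup x hx] at h0
          exact h0
        constructor
        · have h1 : x j1 = p 0 j1 + (x j0).val • ww j1 := by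
            conv_lhs => rw [hx']
            rfl
          rw [h1, hwwj1]
          rw [show (x j0).val • (-1 : ZMod μ) = -(x j0) from by
            rw [smul_neg, nsmul_eq_mul, mul_one, ZMod.natCast_zmod_val]]
          ring
        · intro k hk0 hk1
          have h1 : x k = p 0 k + (x j0).val • ww k := by
            conv_lhs => rw [hx']
            rfl
          rw [h1, hwwk k hk0 hk1, smul_zero, add_zero]
      · rintro ⟨hsum', hco⟩
        have hxx : x = p (x j0) := by
          rw [hptB]
          funext k
          by_cases hk0 : k = j0
          · rw [hk0]
            show x j0 = p 0 j0 + (x j0).val • ww j0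
            rw [show p 0 j0 = 0 from hpc 0, hwwj0, zero_add, nsmul_eq_mul, mul_one,
              ZMod.natCast_zmod_val]
          · by_cases hk1 : k = j1
            · rw [hk1]
              show x j1 = p 0 j1 + (x j0).val • ww j1
              rw [hwwj1, show (x j0).val • (-1 : ZMod μ) = -(x j0) from by
                rw [smul_neg, nsmul_eq_mul, mul_one, ZMod.natCast_zmod_val]]
              linear_combination hsum'
            · show x k = p 0 k + (x j0).val • ww k
              rw [hwwk k hk0 hk1, smul_zero, add_zero]
              exact hco k hk0 hk1
        rw [hxx]
        exact hpH _
    have hB1 : ∀ y ∈ H, ∀ k, k ≠ j0 → k ≠ j1 → u y k = 0 := by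
      intro y hy k hk0 hk1
      have hyk : y k = p 0 k := ((hmemB y).1 hy).2 k hk0 hk1
      have hx1 : y - egen μ d k ∉ H := by
        intro hmem'
        have h1 := ((hmemB _).1 hmem').2 k hk0 hk1
        rw [show (y - egen μ d k) k = y k - 1 from by
          show y k - egen μ d k k = _
          rw [egen_self], hyk] at h1
        exact zmod_one_ne_zero hμ2 (by linear_combination - h1)
      have hdx := hudiv (y - egen μ d k)
      rw [Finset.sum_eq_single k] at hdx
      · rw [sub_add_cancel, hu0 _ hx1 k] at hdx
        linear_combination hdx
      · intro i _ hik
        have hn1 : y - egen μ d k + egen μ d i ∉ H := by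
          intro hmem'
          have h1 := ((hmemB _).1 hmem').2 k hk0 hk1
          rw [show (y - egen μ d k + egen μ d i) k = y k - 1 from by
            show y k - egen μ d k k + egen μ d i k = _
            rw [egen_self, egen_ne' i k (Ne.symm hik), add_zero], hyk] at h1
          exact zmod_one_ne_zero hμ2 (by linear_combination - h1)
        rw [hu0 _ hn1 i, hu0 _ hx1 i, sub_zero]
      · intro h
        exact absurd (Finset.mem_univ k) h
    have hB2 : ∀ y ∈ H, u y j0 + u y j1 = 0 := by
      intro y hy
      obtain ⟨hyS, hyco⟩ := (hmemB y).1 hy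
      have hnb : ∀ i, y + egen μ d i ∉ H := by
        intro i hmem'
        by_cases hi0 : i = j0
        · rw [hi0] at hmem'
          have h1 := ((hmemB _).1 hmem').1
          rw [show (y + egen μ d j0) j0 = y j0 + 1 from by
            show y j0 + egen μ d j0 j0 = _
            rw [egen_self],
            show (y + egen μ d j0) j1 = y j1 from by
            show y j1 + egen μ d j0 j1 = _
            rw [egen_ne' j0 j1 hj1, add_zero]] at h1
          exact zmod_one_ne_zero hμ2 (by linear_combination h1 - hyS)
        · by_cases hi1 : i = j1
          · rw [hi1] at hmem'
            have h1 := ((hmemB _).1 hmem').1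
            rw [show (y + egen μ d j1) j0 = y j0 from by
              show y j0 + egen μ d j1 j0 = _
              rw [egen_ne' j1 j0 (Ne.symm hj1), add_zero],
              show (y + egen μ d j1) j1 = y j1 + 1 from by
              show y j1 + egen μ d j1 j1 = _
              rw [egen_self]] at h1
            exact zmod_one_ne_zero hμ2 (by linear_combination h1 - hyS)
          · have h1 := ((hmemB _).1 hmem').2 i hi0 hi1
            rw [show (y + egen μ d i) i = y i + 1 from by
              show y i + egen μ d i i = _
              rw [egen_self], hyco i hi0 hi1] at h1
            exact zmod_one_ne_zero hμ2 (by linear_combination h1)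
      have hdx := hudiv y
      rw [Finset.sum_congr rfl (fun i _ => by
        rw [hu0 _ (hnb i) i, zero_sub] :
        ∀ i ∈ Finset.univ, u (y + egen μ d i) i - u y i = - u y i)] at hdx
      rw [Finset.sum_neg_distrib, neg_eq_zero] at hdx
      have hsplit : ∑ i : Fin d, u y i = u y j0 + u y j1 := by
        have h0 : ∑ i ∈ ({j0, j1} : Finset (Fin d)), u y i = ∑ i : Fin d, u y i := by
          apply Finset.sum_subset (Finset.subset_univ _)
          intro i _ hi
          simp only [Finset.mem_insert, Finset.mem_singleton, not_or] at hi
          exact hB1 y hy i hi.1 hi.2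
        rw [← h0, Finset.sum_pair (show j0 ≠ j1 from Ne.symm hj1)]
      rw [← hsplit]
      exact hdx
    have hB3 : ∀ y ∈ H, u (y + ww) j1 = u y j1 := by
      intro y hy
      obtain ⟨hyS, hyco⟩ := (hmemB y).1 hy
      have hyww : y + ww ∈ H := by
        rw [hmemB]
        constructor
        · rw [show (y + ww) j0 = y j0 + 1 from by
            show y j0 + ww j0 = _
            rw [hwwj0],
            show (y + ww) j1 = y j1 - 1 from by
            show y j1 + ww j1 = _
            rw [hwwj1]
            ring]
          linear_combination hyS
        · intro k hk0 hk1
          show y k + ww k = p 0 k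
          rw [hwwk k hk0 hk1, add_zero]
          exact hyco k hk0 hk1
      set x' : Gp μ d := y - egen μ d j1 with hx'
      have hx'n : x' ∉ H := by
        intro hmem'
        have h1 := ((hmemB _).1 hmem').1
        rw [show x' j0 = y j0 from by
          simp only [hx']
          show y j0 - egen μ d j1 j0 = _
          rw [egen_ne' j1 j0 (Ne.symm hj1), sub_zero],
          show x' j1 = y j1 - 1 from by
          simp only [hx']
          show y j1 - egen μ d j1 j1 = _
          rw [egen_self]] at h1
        exact zmod_one_ne_zero hμ2 (by linear_combination hyS - h1)
      have he0 : x' + egen μ d j0 = y + ww := by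
        simp only [hx', hww]
        abel
      have he1 : x' + egen μ d j1 = y := by
        simp only [hx']
        exact sub_add_cancel _ _
      have hothers : ∀ i, i ≠ j0 → i ≠ j1 → x' + egen μ d i ∉ H := by
        intro i hi0 hi1 hmem'
        have h1 := ((hmemB _).1 hmem').2 i hi0 hi1
        rw [show (x' + egen μ d i) i = y i + 1 from by
          simp only [hx']
          show y i - egen μ d j1 i + egen μ d i i = _
          rw [egen_ne' j1 i hi1, sub_zero, egen_self], hyco i hi0 hi1] at h1
        exact zmod_one_ne_zero hμ2 (by linear_combination h1)
      have hdx := hudiv x'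
      have hsplit : ∑ i : Fin d, (u (x' + egen μ d i) i - u x' i)
          = (u (x' + egen μ d j0) j0 - u x' j0) + (u (x' + egen μ d j1) j1 - u x' j1) := by
        have h0 : ∑ i ∈ ({j0, j1} : Finset (Fin d)), (u (x' + egen μ d i) i - u x' i)
            = ∑ i : Fin d, (u (x' + egen μ d i) i - u x' i) := by
          apply Finset.sum_subset (Finset.subset_univ _)
          intro i _ hi
          simp only [Finset.mem_insert, Finset.mem_singleton, not_or] at hi
          rw [hu0 _ (hothers i hi.1 hi.2) i, hu0 _ hx'n i, sub_zero]
        rw [← h0, Finset.sum_pair (show j0 ≠ j1 from Ne.symm hj1)]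
      rw [hsplit, he0, he1, hu0 _ hx'n j0, hu0 _ hx'n j1, sub_zero, sub_zero] at hdx
      have h2 := hB2 _ hyww
      linear_combination h2 - hdx
    set lam : ℂ := u (p 0) j0 with hlam
    have hB4 : ∀ y ∈ H, u y j0 = lam := by
      intro y hy
      have hind : ∀ n : ℕ, u (p 0 + n • ww) j1 = u (p 0) j1 := by
        intro n
        induction n with
        | zero => simp
        | succ n ih =>
          have hmem' : p 0 + n • ww ∈ H := by
            have := hrecBn n 0
            rw [zero_add] at this
            rw [← this]
            exact hpH _
          rw [succ_nsmul, ← add_assoc, hB3 _ hmem', ih]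
      have h1 : u y j1 = u (p 0) j1 := by
        conv_lhs => rw [hxup y hy, hptB]
        exact hind _
      have h2 := hB2 y hy
      have h3 := hB2 (p 0) (hpH 0)
      simp only [hlam]
      linear_combination h2 - h3 - h1
    have hB5 : ∀ y ∈ H, u y j1 = - lam := by
      intro y hy
      have h2 := hB2 y hy
      rw [hB4 y hy] at h2
      linear_combination h2
    have hbj0' : (μ:ℂ) ^ (d-1) * b j0 = lam := by
      have h1 := hbk j0
      have h2 : ∑ x ∈ H, u x j0 = (μ:ℂ) * lam := by
        rw [Finset.sum_congr rfl (fun x hx => hB4 x hx), Finset.sum_const, hcardμ,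
          nsmul_eq_mul]
      rw [h2] at h1
      have h3 : (μ:ℂ) * ((μ:ℂ) ^ (d-1) * b j0) = (μ:ℂ) * lam := by
        rw [← h1]
        rw [show (μ:ℂ) ^ d = (μ:ℂ) * (μ:ℂ) ^ (d-1) from by
          rw [← pow_succ']
          congr 1
          omega]
        ring
      exact mul_left_cancel₀ hμC h3
    have hbj1' : (μ:ℂ) ^ (d-1) * b j1 = - lam := by
      have h1 := hbk j1
      have h2 : ∑ x ∈ H, u x j1 = (μ:ℂ) * (- lam) := by
        rw [Finset.sum_congr rfl (fun x hx => hB5 x hx), Finset.sum_const, hcardμ,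
          nsmul_eq_mul]
      rw [h2] at h1
      have h3 : (μ:ℂ) * ((μ:ℂ) ^ (d-1) * b j1) = (μ:ℂ) * (- lam) := by
        rw [← h1]
        rw [show (μ:ℂ) ^ d = (μ:ℂ) * (μ:ℂ) ^ (d-1) from by
          rw [← pow_succ']
          congr 1
          omega]
        ring
      exact mul_left_cancel₀ hμC h3
    have hbk0 : ∀ k, k ≠ j0 → k ≠ j1 → b k = 0 := by
      intro k hk0 hk1
      have h1 := hbk k
      rw [Finset.sum_eq_zero (fun x hx => hB1 x hx k hk0 hk1)] at h1
      exact (mul_eq_zero.1 h1).resolve_left (pow_ne_zero _ hμC)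
    have hbj0 : b j0 = lam / (μ:ℂ) ^ (d-1) := by
      rw [eq_div_iff hμd1]
      linear_combination hbj0'
    have hbj1 : b j1 = - lam / (μ:ℂ) ^ (d-1) := by
      rw [eq_div_iff hμd1]
      linear_combination hbj1'
    refine ⟨lam / ((μ:ℂ) ^ (d-1) * a j0), ?_⟩
    funext x
    ext j
    rw [PiLp.smul_apply, PiLp.smul_apply, Complex.real_smul, smul_eq_mul, hwub]
    by_cases hjj0 : j = j0
    · rw [hjj0]
      by_cases hxH : x ∈ H
      · rw [hB4 x hxH, hvinC x hxH, hbj0]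
        field_simp
      · rw [hu0 x hxH j0, hvout x hxH, hbj0]
        push_cast
        field_simp
        try ring
    · by_cases hjj1 : j = j1
      · rw [hjj1, haj1]
        by_cases hxH : x ∈ H
        · rw [hB5 x hxH, hvinC x hxH, hbj1]
          field_simp
          ring
        · rw [hu0 x hxH j1, hvout x hxH, hbj1]
          push_cast
          field_simp
          try ring
      · rw [hazB j hjj0 hjj1, mul_zero, mul_zero, hbk0 j hjj0 hjj1, sub_zero]
        by_cases hxH : x ∈ H
        · exact hB1 x hxH j hjj0 hjj1
        · exact hu0 x hxH j

end Statement12Proof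

/-- for `μ ≥ 4` and `d ≥ 2`, the space `W_∇` is non-local of order `1/d` and
the space `W_div` is non-local of order `(d-1)/d`. -/
theorem statement12 (μ d : ℕ) [NeZero μ] (hμ : 4 ≤ μ) (hd : 2 ≤ d) :
    NonLocalC μ d (Wgrad μ d) ((d : ℝ)⁻¹) ∧
      NonLocalC μ d (Wdiv μ d) (((d : ℝ) - 1) / d) := by
  exact ⟨nonlocal_grad μ d hμ hd, nonlocal_div μ d hμ hd⟩

end TracePaper
end
end

section
/- Fix a linear subspace W ⊆ V⊗ℝ^ℓ. Let U ⊆ (ℝ^ℓ)^m be an open neighborhood of the set {(x_1,…,x_m) ∈ (ℝ^ℓ)^m : there exist v ∈ 𝕄^W and a ∈ ℝ^ℓ∖{0} such that x_j = (1+v_j)·a for all j ∈ {1,…,m}}. Then there exists ε > 0 such that every tuple (x_1,…,x_m) ∈ (ℝ^ℓ)^m satisfying |x| = 1, x⃗ ∈ W, and (1/m)∑_{j=1}^m |x_j| < (1+ε)·|x| — where x = (1/m)∑_j x_j and x⃗ = (x_1−x,…,x_m−x) — belongs to U. -/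
open MeasureTheory Finset

noncomputable section

namespace TracePaper

variable {ι : Type} [Fintype ι]
variable {E : Type} [AddCommGroup E] [Module ℝ E]

private lemma sameRay_sum_aux {m ℓ : ℕ} (X : Fin m → EuclideanSpace ℝ (Fin ℓ))
    (h : ‖∑ i, X i‖ = ∑ i, ‖X i‖) (j : Fin m) : SameRay ℝ (X j) (∑ i, X i) := by
  set s := ∑ i, X i with hs
  have h1 : ∑ i ∈ Finset.univ.erase j, X i = s - X j := by
    rw [hs, ← Finset.sum_erase_add Finset.univ X (Finset.mem_univ j)]; abel
  have h2 : ‖s - X j‖ ≤ ∑ i, ‖X i‖ - ‖X j‖ := by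
    rw [← h1]
    calc ‖∑ i ∈ Finset.univ.erase j, X i‖ ≤ ∑ i ∈ Finset.univ.erase j, ‖X i‖ :=
          norm_sum_le _ _
      _ = ∑ i, ‖X i‖ - ‖X j‖ := by
          rw [← Finset.sum_erase_add Finset.univ (fun i => ‖X i‖) (Finset.mem_univ j)]; ring
  have h3 : ‖X j + (s - X j)‖ = ‖X j‖ + ‖s - X j‖ := by
    have hle : ‖X j + (s - X j)‖ ≤ ‖X j‖ + ‖s - X j‖ := norm_add_le _ _
    have hge : ‖X j‖ + ‖s - X j‖ ≤ ‖X j + (s - X j)‖ := by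
      have he : X j + (s - X j) = s := by abel
      rw [he, h]; linarith
    linarith
  have h4 := sameRay_iff_norm_add.mpr h3
  have h5 := SameRay.add_right (SameRay.rfl (x := X j)) h4
  simpa using h5

/-- Key step: a configuration with flatness equality and centered part in `W` is rank-one. -/
private lemma rankOne_of_eq {m ℓ : ℕ} (hm : 2 ≤ m)
    (W : Submodule ℝ (Fin m → EuclideanSpace ℝ (Fin ℓ)))
    (X : Fin m → EuclideanSpace ℝ (Fin ℓ))
    (havg : ‖avg X‖ = 1)
    (hW : (fun j => X j - avg X) ∈ W)
    (hflat : (m : ℝ)⁻¹ * ∑ j, ‖X j‖ ≤ 1) :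
    ∃ v ∈ MW (W : Set (Fin m → EuclideanSpace ℝ (Fin ℓ))),
      ∃ a : EuclideanSpace ℝ (Fin ℓ), a ≠ 0 ∧ ∀ j, X j = (1 + v j) • a := by
  have hm0 : (0 : ℝ) < m := by positivity
  set s := ∑ i, X i with hs
  have havg' : avg X = (m : ℝ)⁻¹ • s := by
    simp [avg, hs]
  have hns : ‖s‖ = m := by
    have : ‖avg X‖ = (m : ℝ)⁻¹ * ‖s‖ := by
      rw [havg', norm_smul]
      simp [abs_of_pos (inv_pos.mpr hm0)]
    rw [this] at havg
    field_simp at havg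
    linarith
  have hmne : (m : ℝ) ≠ 0 := ne_of_gt hm0
  have hsum_le : ∑ i, ‖X i‖ ≤ m := by
    have h' := mul_le_mul_of_nonneg_left hflat (le_of_lt hm0)
    rw [← mul_assoc, mul_inv_cancel₀ hmne, one_mul, mul_one] at h'
    exact h'
  have heq : ‖s‖ = ∑ i, ‖X i‖ := by
    have := norm_sum_le Finset.univ X
    rw [← hs] at this
    linarith [hns ▸ this, hns ▸ hsum_le]
  have hs0 : s ≠ 0 := by
    intro h0
    rw [h0, norm_zero] at hns
    linarith
  -- each X j lies on the ray of s
  have hray : ∀ j, ∃ t : ℝ, 0 ≤ t ∧ X j = t • s := by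
    intro j
    exact (sameRay_sum_aux X heq j).exists_nonneg_right hs0
  choose t ht hXt using hray
  have hts : (∑ j, t j) = 1 := by
    have h1 : (∑ j, t j) • s = (1 : ℝ) • s := by
      rw [one_smul, Finset.sum_smul]
      conv_rhs => rw [hs]
      exact Finset.sum_congr rfl fun j _ => (hXt j).symm
    exact smul_left_injective ℝ hs0 h1
  have ha0 : avg X ≠ 0 := by
    intro h0
    rw [h0, norm_zero] at havg
    norm_num at havg
  refine ⟨fun j => m * t j - 1, ⟨?_, ?_, avg X, ha0, ?_⟩, avg X, ha0, ?_⟩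
  · rw [Finset.sum_sub_distrib, ← Finset.mul_sum, hts]
    simp
  · intro j
    show -1 ≤ (m : ℝ) * t j - 1
    nlinarith [mul_nonneg (le_of_lt hm0) (ht j)]
  · have heqfun : (fun j => ((m : ℝ) * t j - 1) • avg X) = fun j => X j - avg X := by
      funext j
      rw [havg', hXt j, smul_smul, ← sub_smul]
      congr 1
      field_simp
      try ring
    rw [heqfun]
    exact hW
  · intro j
    rw [havg', hXt j, smul_smul]
    congr 1
    field_simp
    try ring

/-- Lemma `FlatRankOne`: flat configurations with `x⃗ ∈ W` and `|x| = 1` lie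
in any given neighborhood `U` of the set of rank-one configurations `((1+v_j) a)_j`,
`v ∈ 𝕄^W`, `a ≠ 0`, once `ε` is small enough. -/
theorem statement13 (m ℓ : ℕ) (hm : 2 ≤ m) (hℓ : 1 ≤ ℓ)
    (W : Submodule ℝ (Fin m → EuclideanSpace ℝ (Fin ℓ)))
    (hWV : ∀ w ∈ W, ∑ j, w j = 0)
    (U : Set (Fin m → EuclideanSpace ℝ (Fin ℓ))) (hUopen : IsOpen U)
    (hUsub : {X : Fin m → EuclideanSpace ℝ (Fin ℓ) |
        ∃ v ∈ MW (W : Set (Fin m → EuclideanSpace ℝ (Fin ℓ))),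
          ∃ a : EuclideanSpace ℝ (Fin ℓ), a ≠ 0 ∧ ∀ j, X j = (1 + v j) • a} ⊆ U) :
    ∃ ε > (0 : ℝ), ∀ X : Fin m → EuclideanSpace ℝ (Fin ℓ),
      ‖avg X‖ = 1 →
      (fun j => X j - avg X) ∈ W →
      (m : ℝ)⁻¹ * ∑ j, ‖X j‖ < (1 + ε) * ‖avg X‖ →
      X ∈ U := by
  classical
  have hm0 : (0 : ℝ) < m := by positivity
  set f : (Fin m → EuclideanSpace ℝ (Fin ℓ)) → ℝ := fun X => (m : ℝ)⁻¹ * ∑ j, ‖X j‖ with hf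
  have hf_cont : Continuous f := by
    apply Continuous.mul continuous_const
    exact continuous_finset_sum _ fun j _ => (continuous_apply j).norm
  have havg_cont : Continuous (fun X : Fin m → EuclideanSpace ℝ (Fin ℓ) => avg X) := by
    show Continuous (fun X : Fin m → EuclideanSpace ℝ (Fin ℓ) => ((Fintype.card (Fin m) : ℝ)⁻¹) • ∑ j, X j)
    fun_prop
  -- the "bad" set
  set S : Set (Fin m → EuclideanSpace ℝ (Fin ℓ)) :=
    {X | ‖avg X‖ = 1 ∧ (fun j => X j - avg X) ∈ W ∧ f X ≤ 2} \ U with hS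
  have hkey : ∀ X : Fin m → EuclideanSpace ℝ (Fin ℓ),
      ‖avg X‖ = 1 → (fun j => X j - avg X) ∈ W → f X ≤ 1 → X ∈ U := by
    intro X h1 h2 h3
    obtain ⟨v, hv, a, ha, hXa⟩ := rankOne_of_eq hm W X h1 h2 h3
    exact hUsub ⟨v, hv, a, ha, hXa⟩
  -- f X ≥ ‖avg X‖ always
  have hflb : ∀ X : Fin m → EuclideanSpace ℝ (Fin ℓ), ‖avg X‖ ≤ f X := by
    intro X
    have : ‖avg X‖ ≤ (m : ℝ)⁻¹ * ‖∑ j, X j‖ := by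
      rw [avg, norm_smul]
      simp [abs_of_pos (inv_pos.mpr hm0)]
    calc ‖avg X‖ ≤ (m : ℝ)⁻¹ * ‖∑ j, X j‖ := this
      _ ≤ f X := by
          apply mul_le_mul_of_nonneg_left (norm_sum_le _ _) (le_of_lt (inv_pos.mpr hm0))
  have hScompact : IsCompact S := by
    have hclosed : IsClosed S := by
      apply IsClosed.sdiff _ hUopen
      apply IsClosed.inter
      · exact isClosed_eq havg_cont.norm continuous_const
      apply IsClosed.inter
      · have hWc : IsClosed (W : Set (Fin m → EuclideanSpace ℝ (Fin ℓ))) :=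
          Submodule.closed_of_finiteDimensional W
        exact hWc.preimage (continuous_pi fun j => (continuous_apply j).sub havg_cont)
      · exact isClosed_le hf_cont continuous_const
    have hbdd : Bornology.IsBounded S := by
      apply Bornology.IsBounded.subset (Metric.isBounded_closedBall (x := 0) (r := 2 * m))
      intro X hX
      obtain ⟨⟨_, _, hX2⟩, _⟩ := hX
      simp only [Metric.mem_closedBall, dist_zero_right]
      rw [pi_norm_le_iff_of_nonneg (by positivity)]
      intro j
      have h1 : ‖X j‖ ≤ ∑ i, ‖X i‖ :=
        Finset.single_le_sum (fun i _ => norm_nonneg _) (Finset.mem_univ j)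
      have h2 : ∑ i, ‖X i‖ ≤ 2 * m := by
        have := hX2
        rw [hf] at this
        have hh : (m : ℝ)⁻¹ * ∑ i, ‖X i‖ ≤ 2 := this
        have h' := mul_le_mul_of_nonneg_left hh (le_of_lt hm0)
        rw [← mul_assoc, mul_inv_cancel₀ (ne_of_gt hm0), one_mul] at h'
        linarith
      linarith
    exact Metric.isCompact_of_isClosed_isBounded hclosed hbdd
  by_cases hSne : S.Nonempty
  · obtain ⟨X₀, hX₀S, hX₀min⟩ := hScompact.exists_isMinOn hSne hf_cont.continuousOn
    obtain ⟨⟨h1, h2, h3⟩, h4⟩ := hX₀S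
    have hgt : 1 < f X₀ := by
      rcases lt_or_ge 1 (f X₀) with h | h
      · exact h
      · exact absurd (hkey X₀ h1 h2 h) h4
    refine ⟨min (f X₀ - 1) 1, lt_min (by linarith) one_pos, ?_⟩
    intro X hn hw hlt
    by_contra hXU
    have hXS : X ∈ S := by
      refine ⟨⟨hn, hw, ?_⟩, hXU⟩
      have : f X < 1 + min (f X₀ - 1) 1 := by
        rw [hn, mul_one] at hlt; exact hlt
      have := min_le_right (f X₀ - 1) 1
      linarith
    have := hX₀min hXS
    have hlt' : f X < 1 + min (f X₀ - 1) 1 := by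
      rw [hn, mul_one] at hlt; exact hlt
    have := min_le_left (f X₀ - 1) 1
    have : f X₀ ≤ f X := hX₀min hXS
    linarith
  · refine ⟨1, one_pos, ?_⟩
    intro X hn hw hlt
    by_contra hXU
    apply hSne
    refine ⟨X, ⟨hn, hw, ?_⟩, hXU⟩
    rw [hn, mul_one] at hlt
    rw [hf]
    linarith

end TracePaper
end
end

section
/- Let k ∈ {0,1,…,d}. Suppose W ⊆ V⊗ℂ^l is translation invariant and #(Ω^{−1}(a) ∩ (−Ω^{−1}(a))) ≤ μ^k − 1 for every a ∈ ℂ^l∖{0}. Suppose moreover that there exists a ∈ ℂ^l∖{0} for which this inequality is an equality and Ω^{−1}(a) = Γ∖{0}, where Γ is a subgroup of G of cardinality μ^k (i.e. of index μ^{d−k}). Then W is a geometric space of order k/d: κ(θ) = (k/d)·(log m)·(1−θ) = k·(log μ)·(1−θ) for all θ ∈ [0,1]. -/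
open MeasureTheory Finset

noncomputable section

namespace TracePaper

variable {ι : Type} [Fintype ι]
variable {E : Type} [AddCommGroup E] [Module ℝ E]

section Fourier

variable (μ d l : ℕ) [NeZero μ]

/-- The Fourier transform `f̂(γ) = ∑_x e^{-2πi(γ·x)/μ} f(x)` on `G = (ℤ/μ)^d`. -/
def fhat (f : Gp μ d → EuclideanSpace ℂ (Fin l)) (γ : Gp μ d) : EuclideanSpace ℂ (Fin l) :=
  ∑ x, ch μ (-(∑ j, γ j * x j)) • f x

/-- The translation invariant space determined by the Fourier-side subspaces `Ω(γ)`: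
`W = {f ∈ V ⊗ ℂ^l : f̂(γ) ∈ Ω(γ) for all γ}`. -/
def WofOmega (Ω : Gp μ d → Submodule ℂ (EuclideanSpace ℂ (Fin l))) :
    Set (Gp μ d → EuclideanSpace ℂ (Fin l)) :=
  {f | (∑ x, f x = 0) ∧ ∀ γ : Gp μ d, fhat μ d l f γ ∈ Ω γ}

/-- `v ⊗ a` is an extremal vector of `W ⊆ V ⊗ ℂ^l` (order `α`) with support `H ⊆ G`. -/
def IsExtremalL (W : Set (Gp μ d → EuclideanSpace ℂ (Fin l))) (α : ℝ)
    (v : Gp μ d → ℝ) (a : EuclideanSpace ℂ (Fin l)) (H : Finset (Gp μ d)) : Prop :=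
  a ≠ 0 ∧ (fun x => v x • a) ∈ W ∧
    (H.card : ℝ) = ((μ : ℝ) ^ d) ^ ((1 : ℝ) - α) ∧
    (∀ x ∈ H, v x = ((μ : ℝ) ^ d) ^ α - 1) ∧ ∀ x ∉ H, v x = -1

end Fourier


section Statement15Aux
set_option linter.unusedSectionVars false
set_option maxHeartbeats 1000000

section ChLemmas
variable (μ : ℕ) [NeZero μ]

lemma ch_zero : ch μ 0 = 1 := by simp [ch]

lemma ch_ne_zero (z : ZMod μ) : ch μ z ≠ 0 := Complex.exp_ne_zero _

lemma ch_add (z w : ZMod μ) : ch μ (z + w) = ch μ z * ch μ w := by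
  have hμ : (μ : ℂ) ≠ 0 := Nat.cast_ne_zero.mpr (NeZero.ne μ)
  rw [ch, ch, ch, ← Complex.exp_add, Complex.exp_eq_exp_iff_exists_int]
  refine ⟨-(((z.val + w.val) / μ : ℕ) : ℤ), ?_⟩
  have hs : (μ : ℕ) * ((z.val + w.val) / μ) + (z + w).val = z.val + w.val := by
    rw [ZMod.val_add]; exact Nat.div_add_mod _ _
  have hc : ((z + w).val : ℂ)
      = (z.val : ℂ) + (w.val : ℂ) - (μ : ℂ) * (((z.val + w.val) / μ : ℕ) : ℂ) := by
    have h := congrArg (fun n : ℕ => (n : ℂ)) hs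
    simp only [Nat.cast_add, Nat.cast_mul] at h
    linear_combination h
  rw [hc]
  simp only [Int.cast_neg, Int.cast_natCast]
  field_simp
  ring

lemma ch_eq_one_iff (z : ZMod μ) : ch μ z = 1 ↔ z = 0 := by
  constructor
  · intro h
    rw [ch, Complex.exp_eq_one_iff] at h
    obtain ⟨n, hn⟩ := h
    have hμ : (μ : ℂ) ≠ 0 := Nat.cast_ne_zero.mpr (NeZero.ne μ)
    have h2πI : (2 * (Real.pi : ℂ) * Complex.I) ≠ 0 := by
      simp [Complex.ofReal_ne_zero, Real.pi_ne_zero, Complex.I_ne_zero]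
    have hn' : (2 * (Real.pi : ℂ) * Complex.I) * (z.val : ℂ)
        = (2 * (Real.pi : ℂ) * Complex.I) * ((n : ℂ) * (μ : ℂ)) := by
      rw [div_eq_iff hμ] at hn
      linear_combination hn
    have hv : (z.val : ℂ) = (n : ℂ) * (μ : ℂ) := mul_left_cancel₀ h2πI hn'
    have hvz : (z.val : ℤ) = n * μ := by exact_mod_cast hv
    have hdvd : (μ : ℕ) ∣ z.val := by
      have hd : ((μ : ℤ)) ∣ (z.val : ℤ) := Dvd.intro n (by linarith)
      exact_mod_cast hd
    exact (ZMod.val_eq_zero z).mp (Nat.eq_zero_of_dvd_of_lt hdvd (ZMod.val_lt z))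
  · rintro rfl; exact ch_zero μ

lemma ch_eq (z : ZMod μ) :
    ch μ z = Complex.exp (((2 * Real.pi * z.val / μ : ℝ) : ℂ) * Complex.I) := by
  rw [ch]; congr 1; push_cast; ring

lemma abs_ch (z : ZMod μ) : ‖ch μ z‖ = 1 := by
  rw [ch_eq, Complex.norm_exp_ofReal_mul_I]

lemma conj_ch (z : ZMod μ) : (starRingEnd ℂ) (ch μ z) = ch μ (-z) := by
  have h1 : ch μ (-z) * ch μ z = 1 := by
    rw [← ch_add]; simp [ch_zero]
  have h2 : (starRingEnd ℂ) (ch μ z) * ch μ z = 1 := by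
    rw [mul_comm, Complex.mul_conj]
    norm_cast
    rw [Complex.normSq_eq_norm_sq, abs_ch]
    norm_num
  exact mul_right_cancel₀ (ch_ne_zero μ z) (h2.trans h1.symm)

end ChLemmas

section DotLemmas
open scoped Classical
variable (μ d : ℕ) [NeZero μ]

def dotP (γ x : Gp μ d) : ZMod μ := ∑ j, γ j * x j

lemma dotP_comm (γ x : Gp μ d) : dotP μ d γ x = dotP μ d x γ := by
  simp [dotP, mul_comm]

lemma dotP_add_right (γ x y : Gp μ d) :
    dotP μ d γ (x + y) = dotP μ d γ x + dotP μ d γ y := by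
  simp [dotP, mul_add, Finset.sum_add_distrib]

lemma dotP_add_left (γ η x : Gp μ d) :
    dotP μ d (γ + η) x = dotP μ d γ x + dotP μ d η x := by
  simp [dotP, add_mul, Finset.sum_add_distrib]

lemma dotP_neg_left (γ x : Gp μ d) : dotP μ d (-γ) x = -dotP μ d γ x := by
  simp [dotP]

lemma dotP_zero_left (x : Gp μ d) : dotP μ d 0 x = 0 := by simp [dotP]

lemma dotP_zero_right (γ : Gp μ d) : dotP μ d γ 0 = 0 := by simp [dotP]

lemma card_Gp : Fintype.card (Gp μ d) = μ ^ d := by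
  simp [Fintype.card_fun, ZMod.card]

/-- Full-group orthogonality. -/
lemma sum_ch_dot (γ : Gp μ d) :
    ∑ x : Gp μ d, ch μ (dotP μ d γ x) = if γ = 0 then ((μ ^ d : ℕ) : ℂ) else 0 := by
  by_cases h : γ = 0
  · subst h
    simp only [dotP_zero_left, ch_zero, Finset.sum_const, nsmul_eq_mul, mul_one]
    rw [Finset.card_univ, card_Gp]
    simp
  · rw [if_neg h]
    obtain ⟨j, hj⟩ : ∃ j, γ j ≠ 0 := by
      by_contra hc
      push_neg at hc
      exact h (funext hc)
    set x₀ : Gp μ d := Pi.single j 1 with hx₀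
    have hdx : dotP μ d γ x₀ = γ j := by
      rw [dotP]
      rw [Finset.sum_eq_single j]
      · simp [hx₀]
      · intro i _ hij
        simp [hx₀, Pi.single_apply, hij]
      · simp
    have key : ∑ x : Gp μ d, ch μ (dotP μ d γ x)
        = ch μ (γ j) * ∑ x : Gp μ d, ch μ (dotP μ d γ x) := by
      calc ∑ x : Gp μ d, ch μ (dotP μ d γ x)
          = ∑ x : Gp μ d, ch μ (dotP μ d γ (x + x₀)) :=
            (Fintype.sum_equiv (Equiv.addRight x₀)
              (fun x => ch μ (dotP μ d γ (x + x₀))) _ (fun x => rfl)).symm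
        _ = ∑ x : Gp μ d, ch μ (γ j) * ch μ (dotP μ d γ x) := by
            refine Finset.sum_congr rfl fun x _ => ?_
            rw [dotP_add_right, ch_add, hdx, mul_comm]
        _ = ch μ (γ j) * ∑ x : Gp μ d, ch μ (dotP μ d γ x) := by
            rw [Finset.mul_sum]
    have hne : ch μ (γ j) - 1 ≠ 0 := by
      intro hc
      exact hj ((ch_eq_one_iff μ (γ j)).mp (by linear_combination hc))
    have : (ch μ (γ j) - 1) * ∑ x : Gp μ d, ch μ (dotP μ d γ x) = 0 := by
      linear_combination -key
    rcases mul_eq_zero.mp this with hc | hc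
    · exact absurd hc hne
    · exact hc

/-- Subgroup orthogonality. -/
lemma sum_ch_subgroup (Γ : AddSubgroup (Gp μ d)) [Fintype Γ] (x : Gp μ d) :
    ∑ γ : Γ, ch μ (dotP μ d (γ : Gp μ d) x)
      = if ∀ γ ∈ Γ, dotP μ d γ x = 0 then (Fintype.card Γ : ℂ) else 0 := by
  by_cases h : ∀ γ ∈ Γ, dotP μ d γ x = 0
  · rw [if_pos h]
    rw [Finset.sum_congr rfl (fun γ _ => by rw [h γ γ.2, ch_zero])]
    simp
  · rw [if_neg h]
    push_neg at h
    obtain ⟨γ₀, hmem, hne⟩ := h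
    set c : Γ := ⟨γ₀, hmem⟩ with hc
    set F : Γ → ℂ := fun γ => ch μ (dotP μ d (γ : Gp μ d) x) with hF
    have hterm : ∀ γ : Γ, F (γ + c) = ch μ (dotP μ d γ₀ x) * F γ := by
      intro γ
      show ch μ (dotP μ d ((γ : Gp μ d) + γ₀) x) = _
      rw [dotP_add_left, ch_add, mul_comm]
    have key : ∑ γ : Γ, F γ = ch μ (dotP μ d γ₀ x) * ∑ γ : Γ, F γ := by
      calc ∑ γ : Γ, F γ = ∑ γ : Γ, F (γ + c) :=
            (Equiv.sum_comp (Equiv.addRight c) F).symm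
        _ = ∑ γ : Γ, ch μ (dotP μ d γ₀ x) * F γ :=
            Finset.sum_congr rfl fun γ _ => hterm γ
        _ = ch μ (dotP μ d γ₀ x) * ∑ γ : Γ, F γ := by rw [Finset.mul_sum]
    have hne' : ch μ (dotP μ d γ₀ x) - 1 ≠ 0 := fun hcc =>
      hne ((ch_eq_one_iff μ _).mp (by linear_combination hcc))
    have hzero : (ch μ (dotP μ d γ₀ x) - 1) * ∑ γ : Γ, F γ = 0 := by
      linear_combination -key
    rcases mul_eq_zero.mp hzero with hcc | hcc
    · exact absurd hcc hne'
    · exact hcc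

lemma dotP_sub_left (γ η x : Gp μ d) :
    dotP μ d (γ - η) x = dotP μ d γ x - dotP μ d η x := by
  rw [sub_eq_add_neg, dotP_add_left, dotP_neg_left, sub_eq_add_neg]
end DotLemmas

section VHat
variable (μ d : ℕ) [NeZero μ]

lemma dotP_neg_right (γ x : Gp μ d) : dotP μ d γ (-x) = -dotP μ d γ x := by
  rw [dotP_comm, dotP_neg_left, dotP_comm]

lemma dotP_sub_right (γ x y : Gp μ d) :
    dotP μ d γ (x - y) = dotP μ d γ x - dotP μ d γ y := by
  rw [sub_eq_add_neg, dotP_add_right, dotP_neg_right, sub_eq_add_neg]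

def vhat (v : Gp μ d → ℝ) (γ : Gp μ d) : ℂ :=
  ∑ x, ch μ (-dotP μ d γ x) * (v x : ℂ)

lemma fhat_tensor (l : ℕ) (v : Gp μ d → ℝ) (a : EuclideanSpace ℂ (Fin l)) (γ : Gp μ d) :
    fhat μ d l (fun x => v x • a) γ = vhat μ d v γ • a := by
  rw [fhat, vhat, Finset.sum_smul]
  refine Finset.sum_congr rfl fun x _ => ?_
  have h1 : (v x) • a = ((v x : ℂ)) • a := by
    rw [← algebraMap_smul ℂ (v x) a]
    norm_num
  rw [h1, smul_smul]
  rfl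

lemma vhat_neg (v : Gp μ d → ℝ) (γ : Gp μ d) :
    vhat μ d v (-γ) = (starRingEnd ℂ) (vhat μ d v γ) := by
  rw [vhat, vhat, map_sum]
  refine Finset.sum_congr rfl fun x _ => ?_
  rw [map_mul, conj_ch, Complex.conj_ofReal, neg_neg, dotP_neg_left, neg_neg]

lemma vhat_zero (v : Gp μ d → ℝ) (h : ∑ x, v x = 0) : vhat μ d v 0 = 0 := by
  rw [vhat]
  have : ∀ x : Gp μ d, ch μ (-dotP μ d 0 x) * (v x : ℂ) = (v x : ℂ) := by
    intro x; rw [dotP_zero_left, neg_zero, ch_zero, one_mul]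
  rw [Finset.sum_congr rfl fun x _ => this x]
  exact_mod_cast congrArg (fun r : ℝ => (r : ℂ)) h

lemma vhat_abs_le (v : Gp μ d → ℝ) (h0 : ∀ x, 0 ≤ v x) (γ : Gp μ d) :
    ‖vhat μ d v γ‖ ≤ ∑ x, v x := by
  calc ‖vhat μ d v γ‖ ≤ ∑ x, ‖ch μ (-dotP μ d γ x) * (v x : ℂ)‖ :=
        norm_sum_le _ _
    _ = ∑ x, v x := by
        refine Finset.sum_congr rfl fun x _ => ?_
        rw [norm_mul, abs_ch, one_mul, Complex.norm_real, Real.norm_eq_abs, abs_of_nonneg (h0 x)]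

/-- Fourier inversion bound. -/
lemma inv_formula (v : Gp μ d → ℝ) (x : Gp μ d) :
    ∑ γ : Gp μ d, ch μ (dotP μ d γ x) * vhat μ d v γ = ((μ ^ d : ℕ) : ℂ) * (v x : ℂ) := by
  have step : ∀ γ : Gp μ d, ch μ (dotP μ d γ x) * vhat μ d v γ
      = ∑ y, ch μ (dotP μ d γ (x - y)) * (v y : ℂ) := by
    intro γ
    rw [vhat, Finset.mul_sum]
    refine Finset.sum_congr rfl fun y _ => ?_
    rw [← mul_assoc, ← ch_add, dotP_sub_right, sub_eq_add_neg]
  rw [Finset.sum_congr rfl fun γ _ => step γ, Finset.sum_comm]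
  have inner : ∀ y : Gp μ d, ∑ γ : Gp μ d, ch μ (dotP μ d γ (x - y)) * (v y : ℂ)
      = (if x - y = 0 then ((μ ^ d : ℕ) : ℂ) else 0) * (v y : ℂ) := by
    intro y
    rw [← Finset.sum_mul]
    congr 1
    rw [Finset.sum_congr rfl fun γ _ => by rw [dotP_comm], sum_ch_dot]
  rw [Finset.sum_congr rfl fun y _ => inner y]
  classical
  have : ∀ y : Gp μ d, (if x - y = 0 then ((μ ^ d : ℕ) : ℂ) else 0) * (v y : ℂ)
      = if y = x then ((μ ^ d : ℕ) : ℂ) * (v y : ℂ) else 0 := by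
    intro y
    by_cases h : y = x
    · subst h
      rw [sub_self, if_pos rfl, if_pos rfl]
    · have hcond : ¬(x - y = 0) := fun hc => h (by rwa [sub_eq_zero, eq_comm] at hc)
      rw [if_neg hcond, zero_mul, if_neg h]
  rw [Finset.sum_congr rfl fun y _ => this y, Finset.sum_ite_eq' Finset.univ x
    (fun y => ((μ ^ d : ℕ) : ℂ) * (v y : ℂ))]
  simp

end VHat

/-- Main pointwise upper bound. -/
lemma one_add_le_pow (μ d l k : ℕ) [NeZero μ]
    (Ω : Gp μ d → Submodule ℂ (EuclideanSpace ℂ (Fin l)))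
    (hsmall : ∀ a : EuclideanSpace ℂ (Fin l), a ≠ 0 →
      ({γ : Gp μ d | a ∈ Ω γ ∧ a ∈ Ω (-γ)}).ncard ≤ μ ^ k - 1)
    (v : Gp μ d → ℝ) (hv : v ∈ MW (WofOmega μ d l Ω)) (x : Gp μ d) :
    1 + v x ≤ (μ : ℝ) ^ k := by
  classical
  obtain ⟨hsum, hge, a, ha, hWsum, hWft⟩ := hv
  have hfhat : ∀ γ, vhat μ d v γ • a ∈ Ω γ := by
    intro γ
    have h := hWft γ
    rwa [fhat_tensor] at h
  have hmemT : ∀ γ : Gp μ d, vhat μ d v γ ≠ 0 → a ∈ Ω γ ∧ a ∈ Ω (-γ) := by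
    intro γ hne
    constructor
    · have h := (Ω γ).smul_mem (vhat μ d v γ)⁻¹ (hfhat γ)
      rwa [smul_smul, inv_mul_cancel₀ hne, one_smul] at h
    · have hne' : vhat μ d v (-γ) ≠ 0 := by
        rw [vhat_neg]
        simpa using hne
      have h := (Ω (-γ)).smul_mem (vhat μ d v (-γ))⁻¹ (hfhat (-γ))
      rwa [smul_smul, inv_mul_cancel₀ hne', one_smul] at h
  set w : Gp μ d → ℝ := fun y => 1 + v y with hw
  have hw0 : ∀ y, 0 ≤ w y := fun y => by have := hge y; simp only [hw]; linarith
  have hwsum : ∑ y, w y = ((μ ^ d : ℕ) : ℝ) := by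
    simp only [hw]
    rw [Finset.sum_add_distrib, hsum, Finset.sum_const, Finset.card_univ, card_Gp]
    simp
  have hwv : ∀ γ : Gp μ d, γ ≠ 0 → vhat μ d w γ = vhat μ d v γ := by
    intro γ hγ
    rw [vhat, vhat]
    have hterm : ∀ y : Gp μ d, ch μ (-dotP μ d γ y) * ((w y : ℝ) : ℂ)
        = ch μ (-dotP μ d γ y) + ch μ (-dotP μ d γ y) * ((v y : ℝ) : ℂ) := by
      intro y
      simp only [hw]
      push_cast
      ring
    rw [Finset.sum_congr rfl fun y _ => hterm y, Finset.sum_add_distrib]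
    have hzero : ∑ y : Gp μ d, ch μ (-dotP μ d γ y) = 0 := by
      have h1 : ∀ y : Gp μ d, ch μ (-dotP μ d γ y) = ch μ (dotP μ d (-γ) y) := by
        intro y; rw [dotP_neg_left]
      rw [Finset.sum_congr rfl fun y _ => h1 y, sum_ch_dot, if_neg (neg_ne_zero.mpr hγ)]
    rw [hzero, zero_add]
  -- support of vhat w
  set S : Finset (Gp μ d) := Finset.univ.filter (fun γ => vhat μ d w γ ≠ 0) with hS
  have hcardS : S.card ≤ μ ^ k := by
    set T : Set (Gp μ d) := {γ : Gp μ d | a ∈ Ω γ ∧ a ∈ Ω (-γ)} with hT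
    have hTfin : T.Finite := Set.toFinite T
    have hsub : S ⊆ insert (0 : Gp μ d) hTfin.toFinset := by
      intro γ hγ
      rw [hS, Finset.mem_filter] at hγ
      by_cases h0 : γ = 0
      · rw [h0]; exact Finset.mem_insert_self _ _
      · refine Finset.mem_insert_of_mem ?_
        rw [Set.Finite.mem_toFinset]
        exact hmemT γ (by rw [← hwv γ h0]; exact hγ.2)
    have h1 : S.card ≤ hTfin.toFinset.card + 1 :=
      le_trans (Finset.card_le_card hsub) (Finset.card_insert_le _ _)
    have h2 : hTfin.toFinset.card = T.ncard := (Set.ncard_eq_toFinset_card T hTfin).symm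
    have h3 : T.ncard ≤ μ ^ k - 1 := hsmall a ha
    have hpow : 1 ≤ μ ^ k := Nat.one_le_pow _ _ (Nat.pos_of_ne_zero (NeZero.ne μ))
    omega
  -- inversion bound
  have hinv := inv_formula μ d w x
  have habs : ((μ ^ d : ℕ) : ℝ) * w x ≤ (S.card : ℝ) * ((μ ^ d : ℕ) : ℝ) := by
    have e1 : ((μ ^ d : ℕ) : ℝ) * w x
        = ‖((μ ^ d : ℕ) : ℂ) * ((w x : ℝ) : ℂ)‖ := by
      rw [norm_mul, Complex.norm_natCast, Complex.norm_real, Real.norm_eq_abs, abs_of_nonneg (hw0 x)]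
    rw [e1, ← hinv]
    calc ‖∑ γ : Gp μ d, ch μ (dotP μ d γ x) * vhat μ d w γ‖
        ≤ ∑ γ : Gp μ d, ‖ch μ (dotP μ d γ x) * vhat μ d w γ‖ :=
          norm_sum_le _ _
      _ = ∑ γ : Gp μ d, ‖vhat μ d w γ‖ := by
          refine Finset.sum_congr rfl fun γ _ => ?_
          rw [norm_mul, abs_ch, one_mul]
      _ = ∑ γ ∈ S, ‖vhat μ d w γ‖ := by
          refine (Finset.sum_subset (Finset.subset_univ S) fun γ _ hγ => ?_).symm
          rw [hS, Finset.mem_filter] at hγ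
          push_neg at hγ
          rw [hγ (Finset.mem_univ γ), norm_zero]
      _ ≤ ∑ γ ∈ S, ((μ ^ d : ℕ) : ℝ) := by
          refine Finset.sum_le_sum fun γ _ => ?_
          calc ‖vhat μ d w γ‖ ≤ ∑ y, w y := vhat_abs_le μ d w hw0 γ
            _ = ((μ ^ d : ℕ) : ℝ) := hwsum
      _ = (S.card : ℝ) * ((μ ^ d : ℕ) : ℝ) := by rw [Finset.sum_const, nsmul_eq_mul]
  have hmpos : (0 : ℝ) < ((μ ^ d : ℕ) : ℝ) := by
    have : 0 < μ ^ d := Nat.pos_of_ne_zero (pow_ne_zero d (NeZero.ne μ))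
    exact_mod_cast this
  have hwx : w x ≤ (μ : ℝ) ^ k := by
    have hSk : (S.card : ℝ) ≤ (μ : ℝ) ^ k := by exact_mod_cast hcardS
    nlinarith [hw0 x]
  simpa [hw] using hwx

lemma log_le_log_of {x y : ℝ} (h0 : 0 ≤ x) (hxy : x ≤ y) (hy : 1 ≤ y) :
    Real.log x ≤ Real.log y := by
  rcases h0.eq_or_lt with h | h
  · rw [← h, Real.log_zero]
    exact Real.log_nonneg hy
  · exact Real.log_le_log h hxy

lemma kappaV_le_of_bounds {ι : Type} [Fintype ι] [Nonempty ι] (v : ι → ℝ) (M : ℝ)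
    (hM : 1 ≤ M) (h0 : ∀ j, 0 ≤ 1 + v j) (hle : ∀ j, 1 + v j ≤ M)
    (hsum : ∑ j, v j = 0) {θ : ℝ} (hθ0 : 0 ≤ θ) (hθ1 : θ ≤ 1) :
    kappaV ι v θ ≤ Real.log M * (1 - θ) := by
  rcases hθ0.eq_or_lt with hθ | hθ
  · rw [kappaV, if_pos hθ.symm, ← hθ, sub_zero, mul_one]
    refine log_le_log_of ?_ ?_ hM
    · exact le_ciSup_of_le (Set.Finite.bddAbove (Set.finite_range _))
        (Classical.arbitrary ι) (abs_nonneg _)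
    · refine ciSup_le fun j => ?_
      rw [abs_of_nonneg (h0 j)]
      exact hle j
  · rw [kappaV, if_neg (ne_of_gt hθ)]
    have hMpos : (0 : ℝ) < M := lt_of_lt_of_le one_pos hM
    have hθne : θ ≠ 0 := ne_of_gt hθ
    have hexp : (0 : ℝ) ≤ 1 / θ - 1 := by
      have : 1 ≤ 1 / θ := (le_div_iff₀ hθ).mpr (by linarith)
      linarith
    have hterm : ∀ j, |1 + v j| ^ ((1 : ℝ) / θ) ≤ M ^ ((1 : ℝ) / θ - 1) * (1 + v j) := by
      intro j
      rw [abs_of_nonneg (h0 j)]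
      rcases (h0 j).eq_or_lt with h | h
      · rw [← h, Real.zero_rpow (one_div_ne_zero hθne), mul_zero]
      · have heq : (1 + v j) ^ ((1 : ℝ) / θ) = (1 + v j) ^ ((1 : ℝ) / θ - 1) * (1 + v j) := by
          rw [← Real.rpow_add_one (ne_of_gt h)]
          congr 1
          ring
        rw [heq]
        exact mul_le_mul_of_nonneg_right
          (Real.rpow_le_rpow (le_of_lt h) (hle j) hexp) (le_of_lt h)
    have hcard : (0 : ℝ) < (Fintype.card ι : ℝ) := by
      exact_mod_cast Fintype.card_pos
    have hsum2 : ∑ j, |1 + v j| ^ ((1 : ℝ) / θ) ≤ M ^ ((1 : ℝ) / θ - 1) * (Fintype.card ι : ℝ) := by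
      calc ∑ j, |1 + v j| ^ ((1 : ℝ) / θ) ≤ ∑ j, M ^ ((1 : ℝ) / θ - 1) * (1 + v j) :=
            Finset.sum_le_sum fun j _ => hterm j
        _ = M ^ ((1 : ℝ) / θ - 1) * ∑ j, (1 + v j) := by rw [Finset.mul_sum]
        _ = M ^ ((1 : ℝ) / θ - 1) * (Fintype.card ι : ℝ) := by
            rw [Finset.sum_add_distrib, hsum, Finset.sum_const, Finset.card_univ]
            simp
    have havg : (Fintype.card ι : ℝ)⁻¹ * ∑ j, |1 + v j| ^ ((1 : ℝ) / θ)
        ≤ M ^ ((1 : ℝ) / θ - 1) := by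
      rw [inv_mul_le_iff₀ hcard]
      linarith [hsum2]
    have hlog : Real.log ((Fintype.card ι : ℝ)⁻¹ * ∑ j, |1 + v j| ^ ((1 : ℝ) / θ))
        ≤ (1 / θ - 1) * Real.log M := by
      rw [← Real.log_rpow hMpos]
      refine log_le_log_of ?_ havg ?_
      · positivity
      · exact Real.one_le_rpow hM hexp
    calc θ * Real.log ((Fintype.card ι : ℝ)⁻¹ * ∑ j, |1 + v j| ^ ((1 : ℝ) / θ))
        ≤ θ * ((1 / θ - 1) * Real.log M) :=
          mul_le_mul_of_nonneg_left hlog (le_of_lt hθ)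
      _ = Real.log M * (1 - θ) := by field_simp

/-- The extremal construction. -/
lemma extremal_exists (μ d l k : ℕ) [NeZero μ]
    (Ω : Gp μ d → Submodule ℂ (EuclideanSpace ℂ (Fin l)))
    (a : EuclideanSpace ℂ (Fin l)) (ha : a ≠ 0)
    (Γ : AddSubgroup (Gp μ d)) (hΓcard : (Γ : Set (Gp μ d)).ncard = μ ^ k)
    (hΓset : {γ : Gp μ d | a ∈ Ω γ} = (Γ : Set (Gp μ d)) \ {0}) :
    ∃ v ∈ MW (WofOmega μ d l Ω),
      ∀ θ : ℝ, kappaV (Gp μ d) v θ = (k : ℝ) * Real.log μ * (1 - θ) := by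
  classical
  haveI : Fintype Γ := Fintype.ofFinite _
  have hcardΓfin : Fintype.card Γ = μ ^ k := by
    rw [← Nat.card_eq_fintype_card]
    rw [← hΓcard, ← Nat.card_coe_set_eq]
    rfl
  set Λp : Gp μ d → Prop := fun x => ∀ γ ∈ Γ, dotP μ d γ x = 0 with hΛp
  set ΛF : Finset (Gp μ d) := Finset.univ.filter Λp with hΛF
  set M : ℝ := (μ : ℝ) ^ k with hM
  have hμ1 : (1 : ℝ) ≤ (μ : ℝ) := by
    have := Nat.one_le_iff_ne_zero.mpr (NeZero.ne μ)
    exact_mod_cast this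
  have hM1 : (1 : ℝ) ≤ M := one_le_pow₀ hμ1
  have hMpos : (0 : ℝ) < M := lt_of_lt_of_le one_pos hM1
  set v : Gp μ d → ℝ := fun x => if Λp x then M - 1 else -1 with hv
  have hvpos : ∀ x, Λp x → v x = M - 1 := fun x h => by
    show (if Λp x then M - 1 else -1) = M - 1
    rw [if_pos h]
  have hvneg : ∀ x, ¬Λp x → v x = -1 := fun x h => by
    show (if Λp x then M - 1 else -1) = -1
    rw [if_neg h]
  -- the subgroup character sum
  have hSg : ∀ x, ((v x : ℝ) : ℂ)
      = (∑ γ' : Γ, ch μ (dotP μ d (γ' : Gp μ d) x)) - 1 := by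
    intro x
    rw [sum_ch_subgroup, hcardΓfin]
    by_cases h : Λp x
    · rw [if_pos h, hvpos x h, hM]
      push_cast
      ring
    · rw [if_neg h, hvneg x h]
      push_cast
      ring
  -- cardinality of the annihilator
  have hdouble : (ΛF.card : ℂ) * ((μ ^ k : ℕ) : ℂ) = ((μ ^ d : ℕ) : ℂ) := by
    have h1 : ∑ x : Gp μ d, ∑ γ' : Γ, ch μ (dotP μ d (γ' : Gp μ d) x)
        = ((μ ^ d : ℕ) : ℂ) := by
      rw [Finset.sum_comm]
      rw [Finset.sum_congr rfl fun (γ' : Γ) _ => sum_ch_dot μ d (γ' : Gp μ d)]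
      simp only [ZeroMemClass.coe_eq_zero]
      rw [Finset.sum_ite_eq' Finset.univ (0 : Γ) (fun _ => ((μ ^ d : ℕ) : ℂ))]
      simp
    have h2 : ∑ x : Gp μ d, ∑ γ' : Γ, ch μ (dotP μ d (γ' : Gp μ d) x)
        = (ΛF.card : ℂ) * ((μ ^ k : ℕ) : ℂ) := by
      have step : ∀ x : Gp μ d, ∑ γ' : Γ, ch μ (dotP μ d (γ' : Gp μ d) x)
          = if Λp x then ((μ ^ k : ℕ) : ℂ) else 0 := by
        intro x
        rw [sum_ch_subgroup μ d Γ x, hcardΓfin]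
      rw [Finset.sum_congr rfl fun x _ => step x, Finset.sum_ite, Finset.sum_const,
        Finset.sum_const]
      simp only [smul_zero, add_zero, nsmul_eq_mul]
      rfl
    rw [← h2, h1]
  have hΛM : (ΛF.card : ℝ) * M = (μ : ℝ) ^ d := by
    have : ((ΛF.card * μ ^ k : ℕ) : ℂ) = ((μ ^ d : ℕ) : ℂ) := by push_cast at hdouble ⊢; exact_mod_cast hdouble
    have hnat : ΛF.card * μ ^ k = μ ^ d := by exact_mod_cast this
    have := congrArg (fun n : ℕ => (n : ℝ)) hnat
    push_cast at this
    rw [hM]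
    exact this
  have hΛpos : (0 : Gp μ d) ∈ ΛF := by
    rw [hΛF, Finset.mem_filter]
    exact ⟨Finset.mem_univ _, fun γ _ => dotP_zero_right μ d γ⟩
  -- basic properties of v
  have hv0 : Λp 0 := fun γ _ => dotP_zero_right μ d γ
  have hvsum : ∑ x, v x = 0 := by
    have : ∀ x : Gp μ d, v x = (if Λp x then M else 0) - 1 := by
      intro x
      by_cases h : Λp x
      · rw [hvpos x h, if_pos h]
      · rw [hvneg x h, if_neg h]; ring
    rw [Finset.sum_congr rfl fun x _ => this x, Finset.sum_sub_distrib,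
      Finset.sum_ite, Finset.sum_const, Finset.sum_const, Finset.sum_const]
    simp only [smul_zero, add_zero, nsmul_eq_mul, mul_one, smul_eq_mul]
    rw [← hΛF, Finset.card_univ, card_Gp]
    rw [hΛM]
    push_cast
    ring
  have hvge : ∀ x, -1 ≤ v x := by
    intro x
    by_cases h : Λp x
    · rw [hvpos x h]; linarith
    · rw [hvneg x h]
  -- Fourier transform of v
  have hvhat : ∀ γ : Gp μ d, vhat μ d v γ
      = if γ ∈ Γ ∧ γ ≠ 0 then ((μ ^ d : ℕ) : ℂ) else 0 := by
    intro γ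
    rw [vhat]
    have e1 : ∀ x : Gp μ d, ch μ (-dotP μ d γ x) * ((v x : ℝ) : ℂ)
        = (∑ γ' : Γ, ch μ (dotP μ d ((γ' : Gp μ d) - γ) x)) - ch μ (dotP μ d (-γ) x) := by
      intro x
      rw [hSg x, mul_sub, mul_one, Finset.mul_sum, dotP_neg_left]
      congr 1
      refine Finset.sum_congr rfl fun γ' _ => ?_
      rw [← ch_add, dotP_sub_left]
      congr 1
      ring
    rw [Finset.sum_congr rfl fun x _ => e1 x, Finset.sum_sub_distrib]
    have e2 : ∑ x : Gp μ d, ∑ γ' : Γ, ch μ (dotP μ d ((γ' : Gp μ d) - γ) x)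
        = if γ ∈ Γ then ((μ ^ d : ℕ) : ℂ) else 0 := by
      rw [Finset.sum_comm]
      rw [Finset.sum_congr rfl fun (γ' : Γ) _ => sum_ch_dot μ d ((γ' : Gp μ d) - γ)]
      have hcond : ∀ γ' : Γ, ((γ' : Gp μ d) - γ = 0) ↔ ((γ' : Gp μ d) = γ) := by
        intro γ'; rw [sub_eq_zero]
      by_cases hγΓ : γ ∈ Γ
      · rw [if_pos hγΓ, Finset.sum_eq_single (⟨γ, hγΓ⟩ : Γ)]
        · rw [if_pos (by simp)]
        · intro b _ hb
          rw [if_neg (fun hc => hb (Subtype.ext (by rwa [sub_eq_zero] at hc)))]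
        · intro h; exact absurd (Finset.mem_univ _) h
      · rw [if_neg hγΓ]
        refine Finset.sum_eq_zero fun γ' _ => ?_
        refine if_neg (fun hc => hγΓ ?_)
        rw [sub_eq_zero] at hc
        exact hc ▸ γ'.2
    have e3 : ∑ x : Gp μ d, ch μ (dotP μ d (-γ) x) = if γ = 0 then ((μ ^ d : ℕ) : ℂ) else 0 := by
      rw [sum_ch_dot]
      by_cases h : γ = 0
      · rw [if_pos (by simp [h]), if_pos h]
      · rw [if_neg (by simp [h]), if_neg h]
    rw [e2, e3]
    by_cases h1 : γ ∈ Γ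
    · by_cases h2 : γ = 0
      · rw [if_pos h1, if_pos h2, if_neg (by simp [h2]), sub_self]
      · rw [if_pos h1, if_neg h2, if_pos ⟨h1, h2⟩, sub_zero]
    · have h2 : γ ≠ 0 := fun hc => h1 (hc ▸ Γ.zero_mem)
      rw [if_neg h1, if_neg h2, if_neg (fun hc => h1 hc.1), sub_zero]
  -- membership in MW
  have hmem : v ∈ MW (WofOmega μ d l Ω) := by
    refine ⟨hvsum, hvge, a, ha, ?_, ?_⟩
    · rw [← Finset.sum_smul, hvsum, zero_smul]
    · intro γ
      rw [fhat_tensor, hvhat]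
      by_cases h : γ ∈ Γ ∧ γ ≠ 0
      · rw [if_pos h]
        have haγ : a ∈ Ω γ := by
          have : γ ∈ {γ : Gp μ d | a ∈ Ω γ} := by
            rw [hΓset]
            exact ⟨h.1, by simpa using h.2⟩
          exact this
        exact (Ω γ).smul_mem _ haγ
      · rw [if_neg h, zero_smul]
        exact (Ω γ).zero_mem
  -- the value of kappaV
  refine ⟨v, hmem, fun θ => ?_⟩
  have habs : ∀ x : Gp μ d, |1 + v x| = if Λp x then M else 0 := by
    intro x
    by_cases h : Λp x
    · rw [hvpos x h, if_pos h]
      rw [show (1 : ℝ) + (M - 1) = M by ring, abs_of_pos hMpos]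
    · rw [hvneg x h, if_neg h]
      norm_num
  have hlogM : Real.log M = (k : ℝ) * Real.log μ := by
    rw [hM, Real.log_pow]
  by_cases hθ : θ = 0
  · rw [kappaV, if_pos hθ, hθ, sub_zero, mul_one, ← hlogM]
    congr 1
    apply le_antisymm
    · refine ciSup_le fun x => ?_
      rw [habs x]
      by_cases h : Λp x
      · rw [if_pos h]
      · rw [if_neg h]; exact le_of_lt hMpos
    · refine le_ciSup_of_le (Set.Finite.bddAbove (Set.finite_range _)) (0 : Gp μ d) ?_
      rw [habs 0, if_pos hv0]
  · rw [kappaV, if_neg hθ]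
    have hsumr : ∑ x : Gp μ d, |1 + v x| ^ ((1 : ℝ) / θ) = (ΛF.card : ℝ) * M ^ ((1 : ℝ) / θ) := by
      have : ∀ x : Gp μ d, |1 + v x| ^ ((1 : ℝ) / θ)
          = if Λp x then M ^ ((1 : ℝ) / θ) else 0 := by
        intro x
        rw [habs x]
        by_cases h : Λp x
        · rw [if_pos h, if_pos h]
        · rw [if_neg h, if_neg h, Real.zero_rpow (one_div_ne_zero hθ)]
      rw [Finset.sum_congr rfl fun x _ => this x, Finset.sum_ite, Finset.sum_const,
        Finset.sum_const]
      simp [hΛF, nsmul_eq_mul]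
    have hcard : (Fintype.card (Gp μ d) : ℝ) = (ΛF.card : ℝ) * M := by
      rw [card_Gp, hΛM]; push_cast; ring
    have hΛcpos : (0 : ℝ) < (ΛF.card : ℝ) := by
      have : 0 < ΛF.card := Finset.card_pos.mpr ⟨0, hΛpos⟩
      exact_mod_cast this
    have havg : (Fintype.card (Gp μ d) : ℝ)⁻¹ * ∑ x : Gp μ d, |1 + v x| ^ ((1 : ℝ) / θ)
        = M ^ ((1 : ℝ) / θ - 1) := by
      rw [hsumr, hcard, Real.rpow_sub hMpos, Real.rpow_one]
      field_simp
    rw [havg, Real.log_rpow hMpos, hlogM]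
    field_simp


lemma statement15_main (μ d l k : ℕ) [NeZero μ] (hμ : 2 ≤ μ) (hd : 1 ≤ d)
    (Ω : Gp μ d → Submodule ℂ (EuclideanSpace ℂ (Fin l)))
    (hsmall : ∀ a : EuclideanSpace ℂ (Fin l), a ≠ 0 →
      ({γ : Gp μ d | a ∈ Ω γ ∧ a ∈ Ω (-γ)}).ncard ≤ μ ^ k - 1)
    (hex : ∃ a : EuclideanSpace ℂ (Fin l), a ≠ 0 ∧
      ({γ : Gp μ d | a ∈ Ω γ ∧ a ∈ Ω (-γ)}).ncard = μ ^ k - 1 ∧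
      ∃ Γ : AddSubgroup (Gp μ d), (Γ : Set (Gp μ d)).ncard = μ ^ k ∧
        {γ : Gp μ d | a ∈ Ω γ} = (Γ : Set (Gp μ d)) \ {0}) :
    ∀ θ ∈ Set.Icc (0 : ℝ) 1,
      kappa (WofOmega μ d l Ω) θ = ((k : ℝ) / d) * Real.log ((μ : ℝ) ^ d) * (1 - θ) := by
  intro θ hθ
  classical
  obtain ⟨a, ha, _, Γ, hΓcard, hΓset⟩ := hex
  obtain ⟨v0, hv0mem, hv0val⟩ := extremal_exists μ d l k Ω a ha Γ hΓcard hΓset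
  set B : ℝ := (k : ℝ) * Real.log μ * (1 - θ) with hB
  set S : Set ℝ := {r | ∃ v ∈ MW (WofOmega μ d l Ω), r = kappaV (Gp μ d) v θ} with hS
  have hub : ∀ r ∈ S, r ≤ B := by
    rintro r ⟨v, hv, rfl⟩
    have h0 : ∀ j, 0 ≤ 1 + v j := fun j => by linarith [hv.2.1 j]
    have hle : ∀ x, 1 + v x ≤ (μ : ℝ) ^ k := fun x =>
      one_add_le_pow μ d l k Ω hsmall v hv x
    have hμ1 : (1 : ℝ) ≤ (μ : ℝ) := by
      have : (1 : ℕ) ≤ μ := le_trans (by norm_num) hμ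
      exact_mod_cast this
    have hM1 : (1 : ℝ) ≤ (μ : ℝ) ^ k := one_le_pow₀ hμ1
    have hbound := kappaV_le_of_bounds v ((μ : ℝ) ^ k) hM1 h0 hle hv.1 hθ.1 hθ.2
    rw [Real.log_pow] at hbound
    calc kappaV (Gp μ d) v θ ≤ (k : ℝ) * Real.log μ * (1 - θ) := hbound
      _ = B := by rw [hB]
  have hmem : B ∈ S := ⟨v0, hv0mem, (hv0val θ).symm⟩
  have hkappa : kappa (WofOmega μ d l Ω) θ = sSup S := rfl
  have hsup : sSup S = B :=
    le_antisymm (csSup_le ⟨B, hmem⟩ hub) (le_csSup ⟨B, fun r hr => hub r hr⟩ hmem)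
  rw [hkappa, hsup, hB, Real.log_pow]
  have hd' : (d : ℝ) ≠ 0 := by
    have : (1 : ℕ) ≤ d := hd
    have h2 : (0 : ℝ) < (d : ℝ) := by exact_mod_cast lt_of_lt_of_le one_pos this
    exact ne_of_gt h2
  field_simp

end Statement15Aux

/-- Lemma `FourierLemma`: if `#(Ω⁻¹(a) ∩ (-Ω⁻¹(a))) ≤ μ^k - 1` for every
`a ≠ 0`, with equality for some `a` for which `Ω⁻¹(a) = Γ \ {0}` with `Γ` a subgroup of
cardinality `μ^k`, then `W` is a geometric space of order `k/d`. -/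
theorem statement15 (μ d l k : ℕ) [NeZero μ] (hμ : 2 ≤ μ) (hd : 1 ≤ d) (hl : 1 ≤ l)
    (hk : k ≤ d)
    (Ω : Gp μ d → Submodule ℂ (EuclideanSpace ℂ (Fin l))) (hΩ0 : Ω 0 = ⊥)
    (hsmall : ∀ a : EuclideanSpace ℂ (Fin l), a ≠ 0 →
      ({γ : Gp μ d | a ∈ Ω γ ∧ a ∈ Ω (-γ)}).ncard ≤ μ ^ k - 1)
    (hex : ∃ a : EuclideanSpace ℂ (Fin l), a ≠ 0 ∧
      ({γ : Gp μ d | a ∈ Ω γ ∧ a ∈ Ω (-γ)}).ncard = μ ^ k - 1 ∧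
      ∃ Γ : AddSubgroup (Gp μ d), (Γ : Set (Gp μ d)).ncard = μ ^ k ∧
        {γ : Gp μ d | a ∈ Ω γ} = (Γ : Set (Gp μ d)) \ {0}) :
    ∀ θ ∈ Set.Icc (0 : ℝ) 1,
      kappa (WofOmega μ d l Ω) θ = ((k : ℝ) / d) * Real.log ((μ : ℝ) ^ d) * (1 - θ) :=
  statement15_main μ d l k hμ hd Ω hsmall hex

end TracePaper
end
end
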